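/- arXiv:1907.02792 — 9 statements merged into one kernel-verified Lean document; each statement's English description precedes it below -/
import Mathlib

section
/- Let n ≥ 1, let A ⊆ ℝⁿ be a closed set and let F : ℝⁿ → ℝⁿ be a diffeomorphism of class C² of ℝⁿ onto ℝⁿ. Then ν_F maps the generalized unit normal bundle of A onto that of F(A): ν_F(N(A)) = N(F(A)). -/
open MeasureTheory Metric

/-- The generalized unit normal bundle `N(A)` of a closed set `A ⊆ ℝⁿ`:
pairs `(a, u)` with `a ∈ A`, `|u| = 1` and `δ_A(a + s u) = s` for some `s > 0`. -/
def normalBundle {n : ℕ} (A : Set (EuclideanSpace ℝ (Fin n))) :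
    Set (EuclideanSpace ℝ (Fin n) × EuclideanSpace ℝ (Fin n)) :=
  {p | p.1 ∈ A ∧ ‖p.2‖ = 1 ∧ ∃ s : ℝ, 0 < s ∧ Metric.infDist (p.1 + s • p.2) A = s}

/-- The map `ν_F (a, u) = (F a, (DF(a)⁻¹)* u / |(DF(a)⁻¹)* u|)` associated to a diffeomorphism
`F` with inverse `G` (so that `DF(a)⁻¹ = DG(F a)`). -/
noncomputable def nuMap {n : ℕ} (F G : EuclideanSpace ℝ (Fin n) → EuclideanSpace ℝ (Fin n))
    (p : EuclideanSpace ℝ (Fin n) × EuclideanSpace ℝ (Fin n)) :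
    EuclideanSpace ℝ (Fin n) × EuclideanSpace ℝ (Fin n) :=
  (F p.1, ‖ContinuousLinearMap.adjoint (fderiv ℝ G (F p.1)) p.2‖⁻¹ •
    ContinuousLinearMap.adjoint (fderiv ℝ G (F p.1)) p.2)

section Aux

open RealInnerProductSpace

set_option maxHeartbeats 1000000

variable {n : ℕ}

local notation "E" => EuclideanSpace ℝ (Fin n)

/-- Characterization of the normal bundle condition via inner products. -/
lemma normal_char {A : Set E} {a u : E} (ha : a ∈ A) (hu : ‖u‖ = 1) {s : ℝ} (hs : 0 < s) :
    Metric.infDist (a + s • u) A = s ↔ ∀ b ∈ A, ⟪b - a, u⟫ ≤ ‖b - a‖ ^ 2 / (2 * s) := by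
  have hdists : ∀ b : E, (dist (a + s • u) b) ^ 2
      = ‖b - a‖ ^ 2 - 2 * s * ⟪b - a, u⟫ + s ^ 2 := by
    intro b
    have h1 : a + s • u - b = s • u - (b - a) := by abel
    rw [dist_eq_norm, h1, norm_sub_sq_real, real_inner_smul_left, norm_smul,
      Real.norm_eq_abs, abs_of_pos hs, hu, real_inner_comm]
    ring
  constructor
  · intro h b hb
    have hd : s ≤ dist (a + s • u) b :=
      h.symm.trans_le (Metric.infDist_le_dist_of_mem hb)
    have hsq : s ^ 2 ≤ (dist (a + s • u) b) ^ 2 := pow_le_pow_left₀ hs.le hd 2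
    rw [hdists b] at hsq
    rw [le_div_iff₀ (by positivity)]
    nlinarith
  · intro h
    refine le_antisymm ?_ ?_
    · calc Metric.infDist (a + s • u) A ≤ dist (a + s • u) a :=
          Metric.infDist_le_dist_of_mem ha
        _ = s := by
          rw [dist_eq_norm, add_sub_cancel_left, norm_smul, Real.norm_eq_abs,
            abs_of_pos hs, hu, mul_one]
    · by_contra hlt
      push_neg at hlt
      obtain ⟨b, hb, hdlt⟩ := (Metric.infDist_lt_iff ⟨a, ha⟩).1 hlt
      have hineq := h b hb
      rw [le_div_iff₀ (by positivity : (0:ℝ) < 2*s)] at hineq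
      nlinarith [hdists b, dist_nonneg (x := a + s • u) (y := b)]

/-- The chain rule identity for adjoints of derivatives of inverse diffeomorphisms. -/
lemma adjoint_inv_id {F G : E → E} (hF : ContDiff ℝ 2 F) (hG : ContDiff ℝ 2 G)
    (hGF : ∀ x, G (F x) = x) (a u : E) :
    ContinuousLinearMap.adjoint (fderiv ℝ F a)
      (ContinuousLinearMap.adjoint (fderiv ℝ G (F a)) u) = u := by
  have h1 : HasFDerivAt F (fderiv ℝ F a) a :=
    (hF.differentiable (by norm_num)).differentiableAt.hasFDerivAt
  have h2 : HasFDerivAt G (fderiv ℝ G (F a)) (F a) :=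
    (hG.differentiable (by norm_num)).differentiableAt.hasFDerivAt
  have hcomp : HasFDerivAt (G ∘ F) ((fderiv ℝ G (F a)).comp (fderiv ℝ F a)) a := h2.comp a h1
  have hGFid : G ∘ F = id := funext hGF
  rw [hGFid] at hcomp
  have hid : (fderiv ℝ G (F a)).comp (fderiv ℝ F a) = ContinuousLinearMap.id ℝ E :=
    hcomp.unique (hasFDerivAt_id a)
  have := congrArg (ContinuousLinearMap.adjoint : (E →L[ℝ] E) → (E →L[ℝ] E)) hid
  rw [ContinuousLinearMap.adjoint_comp, ContinuousLinearMap.adjoint_id] at this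
  calc ContinuousLinearMap.adjoint (fderiv ℝ F a)
        (ContinuousLinearMap.adjoint (fderiv ℝ G (F a)) u)
      = ((ContinuousLinearMap.adjoint (fderiv ℝ F a)).comp
          (ContinuousLinearMap.adjoint (fderiv ℝ G (F a)))) u := rfl
    _ = u := by rw [this]; rfl

/-- One inclusion in the transformation formula for normal bundles. -/
lemma nuMap_image_subset {A : Set E} {F G : E → E} (hF : ContDiff ℝ 2 F) (hG : ContDiff ℝ 2 G)
    (hGF : ∀ x, G (F x) = x) (hFG : ∀ x, F (G x) = x) :
    nuMap F G '' normalBundle A ⊆ normalBundle (F '' A) := by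
  rintro _ ⟨⟨a, u⟩, ⟨ha, hu, s, hs, hdist⟩, rfl⟩
  set c := F a with hc
  set T := fderiv ℝ G c with hT
  set w := ContinuousLinearMap.adjoint T u with hwdef
  have hwu : ContinuousLinearMap.adjoint (fderiv ℝ F a) w = u := adjoint_inv_id hF hG hGF a u
  have hw0 : w ≠ 0 := by
    intro h0
    rw [h0, map_zero] at hwu
    rw [← hwu, norm_zero] at hu
    norm_num at hu
  have hwn : 0 < ‖w‖ := norm_pos_iff.2 hw0
  set v : E := ‖w‖⁻¹ • w with hvdef
  have hv1 : ‖v‖ = 1 := by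
    rw [hvdef, norm_smul, Real.norm_eq_abs, abs_of_pos (inv_pos.2 hwn), inv_mul_cancel₀ hwn.ne']
  have hib : ∀ b ∈ A, ⟪b - a, u⟫ ≤ ‖b - a‖ ^ 2 / (2 * s) := (normal_char ha hu hs).1 hdist
  -- local Lipschitz data for G and fderiv G near c
  obtain ⟨L, t1, ht1, hL⟩ := ((hG.of_le one_le_two).contDiffAt (x := c)).exists_lipschitzOnWith
  have hG' : ContDiff ℝ 1 (fun y => fderiv ℝ G y) := hG.fderiv_right (by norm_num)
  obtain ⟨K, t2, ht2, hK⟩ := (hG'.contDiffAt (x := c)).exists_lipschitzOnWith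
  obtain ⟨r, hr, hball⟩ := Metric.mem_nhds_iff.1 (Filter.inter_mem ht1 ht2)
  have hct1 : c ∈ t1 := (hball (Metric.mem_ball_self hr)).1
  have hct2 : c ∈ t2 := (hball (Metric.mem_ball_self hr)).2
  -- Taylor estimate
  have taylor : ∀ y ∈ Metric.ball c r, ‖G y - G c - T (y - c)‖ ≤ K * ‖y - c‖ ^ 2 := by
    intro y hy
    have hyr : ‖y - c‖ < r := by rwa [← dist_eq_norm, ← Metric.mem_ball]
    have hsub : Metric.closedBall c ‖y - c‖ ⊆ Metric.ball c r :=
      Metric.closedBall_subset_ball hyr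
    have hfd : ∀ z ∈ Metric.closedBall c ‖y - c‖,
        HasFDerivWithinAt (fun z => G z - T z) (fderiv ℝ G z - T)
          (Metric.closedBall c ‖y - c‖) z := fun z _ =>
      (((hG.differentiable (by norm_num)).differentiableAt.hasFDerivAt).sub
        (T.hasFDerivAt)).hasFDerivWithinAt
    have hbd : ∀ z ∈ Metric.closedBall c ‖y - c‖, ‖fderiv ℝ G z - T‖ ≤ K * ‖y - c‖ := by
      intro z hz
      have hzt2 : z ∈ t2 := (hball (hsub hz)).2
      have := hK.dist_le_mul z hzt2 c hct2
      rw [dist_eq_norm] at this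
      calc ‖fderiv ℝ G z - T‖ = ‖fderiv ℝ G z - fderiv ℝ G c‖ := by rw [hT]
        _ ≤ K * dist z c := this
        _ ≤ K * ‖y - c‖ := by
            exact mul_le_mul_of_nonneg_left (Metric.mem_closedBall.1 hz) K.coe_nonneg
    have hcm : c ∈ Metric.closedBall c ‖y - c‖ :=
      Metric.mem_closedBall_self (norm_nonneg _)
    have hym : y ∈ Metric.closedBall c ‖y - c‖ := by
      rw [Metric.mem_closedBall, dist_eq_norm]
    have := (convex_closedBall c ‖y - c‖).norm_image_sub_le_of_norm_hasFDerivWithin_le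
      hfd hbd hcm hym
    have heq : (fun z => G z - T z) y - (fun z => G z - T z) c = G y - G c - T (y - c) := by
      simp only [map_sub]
      abel
    rw [heq] at this
    calc ‖G y - G c - T (y - c)‖ ≤ K * ‖y - c‖ * ‖y - c‖ := this
      _ = K * ‖y - c‖ ^ 2 := by ring
  -- Lipschitz estimate for G
  have hGlip : ∀ y ∈ Metric.ball c r, ‖G y - G c‖ ≤ L * ‖y - c‖ := by
    intro y hy
    have := hL.dist_le_mul y (hball hy).1 c hct1
    rwa [dist_eq_norm, dist_eq_norm] at this
  set K₁ : ℝ := L ^ 2 / (2 * s) + K with hK₁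
  set K₂ : ℝ := max K₁ (‖w‖ / r) with hK₂
  have hK₂pos : 0 < K₂ := lt_of_lt_of_le (div_pos hwn hr) (le_max_right _ _)
  set t : ℝ := ‖w‖ / (2 * (K₂ + 1)) with htdef
  have ht : 0 < t := div_pos hwn (by linarith)
  have hmain : ∀ b ∈ A, ⟪F b - c, w⟫ ≤ K₂ * ‖F b - c‖ ^ 2 := by
    intro b hb
    by_cases hcase : F b ∈ Metric.ball c r
    · have h1 : ⟪F b - c, w⟫ = ⟪T (F b - c), u⟫ :=
        ContinuousLinearMap.adjoint_inner_right T (F b - c) u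
      have hR : ‖G (F b) - G c - T (F b - c)‖ ≤ K * ‖F b - c‖ ^ 2 := taylor _ hcase
      have hba : G (F b) - G c = b - a := by rw [hGF b, hc, hGF a]
      rw [hba] at hR
      have h2 : T (F b - c) = (b - a) - ((b - a) - T (F b - c)) := by abel
      have h3 : ⟪T (F b - c), u⟫ = ⟪b - a, u⟫ - ⟪(b - a) - T (F b - c), u⟫ := by
        rw [h2, inner_sub_left]
        abel_nf
      have h4 : ⟪(b - a) - T (F b - c), u⟫ ≥ -(K * ‖F b - c‖ ^ 2) := by
        have habs := abs_real_inner_le_norm ((b - a) - T (F b - c)) u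
        rw [hu, mul_one] at habs
        have := neg_abs_le (⟪(b - a) - T (F b - c), u⟫)
        nlinarith [abs_nonneg (⟪(b - a) - T (F b - c), u⟫)]
      have h5 : ‖b - a‖ ≤ L * ‖F b - c‖ := by
        have := hGlip _ hcase
        rwa [hba] at this
      have h6 : ‖b - a‖ ^ 2 ≤ L ^ 2 * ‖F b - c‖ ^ 2 := by
        nlinarith [norm_nonneg (b - a), norm_nonneg (F b - c), NNReal.coe_nonneg L]
      have h7 : ⟪b - a, u⟫ ≤ ‖b - a‖ ^ 2 / (2 * s) := hib b hb
      have h8 : ‖b - a‖ ^ 2 / (2 * s) ≤ L ^ 2 * ‖F b - c‖ ^ 2 / (2 * s) :=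
        div_le_div_of_nonneg_right h6 (by positivity) |>.trans_eq rfl
      have hK1le : K₁ ≤ K₂ := le_max_left _ _
      have : ⟪F b - c, w⟫ ≤ K₁ * ‖F b - c‖ ^ 2 := by
        rw [h1, h3, hK₁]
        have : L ^ 2 * ‖F b - c‖ ^ 2 / (2 * s) = L ^ 2 / (2 * s) * ‖F b - c‖ ^ 2 := by ring
        nlinarith
      nlinarith [sq_nonneg ‖F b - c‖]
    · have hX : r ≤ ‖F b - c‖ := by
        rw [Metric.mem_ball, not_lt, dist_eq_norm] at hcase
        exact hcase
      have hCS : ⟪F b - c, w⟫ ≤ ‖F b - c‖ * ‖w‖ := real_inner_le_norm _ _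
      have hwr : ‖w‖ ≤ K₂ * r := (div_le_iff₀ hr).1 (le_max_right _ _)
      nlinarith [mul_le_mul_of_nonneg_left hwr (norm_nonneg (F b - c)),
        mul_nonneg (mul_nonneg hK₂pos.le (norm_nonneg (F b - c))) (sub_nonneg.2 hX),
        norm_nonneg (F b - c), hr.le]
  -- conclude membership
  have hcFA : c ∈ F '' A := ⟨a, ha, rfl⟩
  refine ⟨hcFA, hv1, t, ht, ?_⟩
  show Metric.infDist (c + t • v) (F '' A) = t
  rw [normal_char hcFA hv1 ht]
  rintro _ ⟨b, hb, rfl⟩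
  have h2t : 2 * t = ‖w‖ / (K₂ + 1) := by
    rw [htdef]
    field_simp
  have hinner : ⟪F b - c, v⟫ = ‖w‖⁻¹ * ⟪F b - c, w⟫ := real_inner_smul_right _ _ _
  rw [hinner, h2t, div_div_eq_mul_div, div_eq_mul_inv, mul_comm (‖F b - c‖ ^ 2 * (K₂ + 1))]
  have hle : ⟪F b - c, w⟫ ≤ ‖F b - c‖ ^ 2 * (K₂ + 1) := by
    have := hmain b hb
    nlinarith [sq_nonneg ‖F b - c‖]
  exact mul_le_mul_of_nonneg_left hle (inv_nonneg.2 hwn.le)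

end Aux

/-- If `A ⊆ ℝⁿ` is closed and `F : ℝⁿ → ℝⁿ` is a `C²` diffeomorphism of `ℝⁿ` onto `ℝⁿ` with
inverse `G`, then `ν_F (N(A)) = N(F(A))`. -/
theorem stmt1 {n : ℕ} (hn : 1 ≤ n) (A : Set (EuclideanSpace ℝ (Fin n))) (hA : IsClosed A)
    (F G : EuclideanSpace ℝ (Fin n) → EuclideanSpace ℝ (Fin n))
    (hF : ContDiff ℝ 2 F) (hG : ContDiff ℝ 2 G)
    (hGF : ∀ x, G (F x) = x) (hFG : ∀ x, F (G x) = x) :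
    nuMap F G '' normalBundle A = normalBundle (F '' A) := by
  apply Set.Subset.antisymm
  · exact nuMap_image_subset hF hG hGF hFG
  · intro p hp
    have hGFA : G '' (F '' A) = A := by
      rw [Set.image_image]
      simp only [hGF, Set.image_id']
    have hq : nuMap G F p ∈ normalBundle A := by
      have := nuMap_image_subset hG hF hFG hGF (Set.mem_image_of_mem (nuMap G F) hp)
      rwa [hGFA] at this
    refine ⟨nuMap G F p, hq, ?_⟩
    -- show nuMap F G (nuMap G F p) = p
    obtain ⟨hp1, hp2, -⟩ := hp
    set w' := ContinuousLinearMap.adjoint (fderiv ℝ F (G p.1)) p.2 with hw'def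
    have hid : ContinuousLinearMap.adjoint (fderiv ℝ G p.1) w' = p.2 := by
      have := adjoint_inv_id hG hF hFG p.1 p.2
      rwa [← hw'def] at this
    have hw'0 : w' ≠ 0 := by
      intro h0
      rw [h0, map_zero] at hid
      rw [← hid, norm_zero] at hp2
      norm_num at hp2
    have hw'n : 0 < ‖w'‖ := norm_pos_iff.2 hw'0
    show nuMap F G (G p.1, ‖w'‖⁻¹ • w') = p
    have hFGp : F (G p.1) = p.1 := hFG p.1
    unfold nuMap
    simp only [hFGp]
    have hz : (ContinuousLinearMap.adjoint (fderiv ℝ G p.1)) (‖w'‖⁻¹ • w') = ‖w'‖⁻¹ • p.2 := by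
      rw [_root_.map_smul, hid]
    rw [hz]
    have hnorm : ‖‖w'‖⁻¹ • p.2‖ = ‖w'‖⁻¹ := by
      rw [norm_smul, Real.norm_eq_abs, abs_of_pos (inv_pos.2 hw'n), hp2, mul_one]
    rw [hnorm, inv_inv, smul_smul, mul_inv_cancel₀ hw'n.ne', one_smul]
end

section
/- Let n ≥ 1, let A ⊆ ℝⁿ be a closed set and let F : ℝⁿ → ℝⁿ be a diffeomorphism of class C² of ℝⁿ onto ℝⁿ. Then for every integer 0 ≤ m ≤ n−1 the image of the m-th stratum of A under F equals the m-th stratum of F(A): F(A^(m)) = (F(A))^(m). -/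
open MeasureTheory Metric ContinuousLinearMap
open scoped RealInnerProductSpace NNReal ENNReal

section helpers
variable {n : ℕ}
local notation "E" => EuclideanSpace ℝ (Fin n)

lemma comp_fderiv_id {F G : E → E} (hF : ContDiff ℝ 2 F) (hG : ContDiff ℝ 2 G)
    (hGF : ∀ x, G (F x) = x) (a : E) :
    (fderiv ℝ G (F a)).comp (fderiv ℝ F a) = ContinuousLinearMap.id ℝ E := by
  have h1 : fderiv ℝ (G ∘ F) a = (fderiv ℝ G (F a)).comp (fderiv ℝ F a) :=
    fderiv_comp a ((hG.differentiable two_ne_zero).differentiableAt)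
      ((hF.differentiable two_ne_zero).differentiableAt)
  have h2 : (G ∘ F) = _root_.id := funext hGF
  rw [h2, fderiv_id] at h1
  exact h1.symm

lemma adjoint_inv {D D' : E →L[ℝ] E} (h : D.comp D' = ContinuousLinearMap.id ℝ E) :
    (ContinuousLinearMap.adjoint D').comp (ContinuousLinearMap.adjoint D)
      = ContinuousLinearMap.id ℝ E := by
  rw [← ContinuousLinearMap.adjoint_comp, h, ContinuousLinearMap.adjoint_id]

end helpers

section taylor
variable {n : ℕ}
local notation "E" => EuclideanSpace ℝ (Fin n)

lemma taylor2 {G : E → E} (hG : ContDiff ℝ 2 G) (b : E) :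
    ∃ C : ℝ, 0 ≤ C ∧ ∀ x ∈ closedBall b 1,
      ‖G x - G b - fderiv ℝ G b (x - b)‖ ≤ C * ‖x - b‖ ^ 2 := by
  have hG1 : ContDiff ℝ 1 (fderiv ℝ G) := hG.fderiv_right (by norm_num)
  -- bound for the second derivative on the closed ball of radius 1
  have hcont : ContinuousOn (fun z => ‖fderiv ℝ (fderiv ℝ G) z‖) (closedBall b 1) :=
    ((hG1.fderiv_right (m := 0) (by norm_num)).continuous.norm).continuousOn
  obtain ⟨C0, hC0⟩ := (isCompact_closedBall b 1).exists_bound_of_continuousOn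
    ((hG1.fderiv_right (m := 0) (by norm_num)).continuous.continuousOn)
  set C := max C0 0 with hCdef
  have hC : 0 ≤ C := le_max_right _ _
  have hC' : ∀ z ∈ closedBall b 1, ‖fderiv ℝ (fderiv ℝ G) z‖ ≤ C :=
    fun z hz => le_trans (hC0 z hz) (le_max_left _ _)
  -- fderiv G is C-Lipschitz on closedBall b 1
  have hlip : ∀ z ∈ closedBall b 1, ∀ w ∈ closedBall b 1,
      ‖fderiv ℝ G z - fderiv ℝ G w‖ ≤ C * ‖z - w‖ := by
    intro z hz w hw
    exact (convex_closedBall b 1).norm_image_sub_le_of_norm_fderiv_le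
      (fun x _ => (hG1.differentiable one_ne_zero).differentiableAt) hC' hw hz
  refine ⟨C, hC, fun x hx => ?_⟩
  set L := fderiv ℝ G b with hL
  set g := fun z => G z - L z with hg
  have hGdiff : Differentiable ℝ G := hG.differentiable two_ne_zero
  have hgdiff : ∀ z, DifferentiableAt ℝ g z := fun z =>
    (hGdiff z).sub (L.differentiableAt)
  have hgderiv : ∀ z, fderiv ℝ g z = fderiv ℝ G z - L := by
    intro z
    rw [hg]
    rw [fderiv_fun_sub (hGdiff z) L.differentiableAt, ContinuousLinearMap.fderiv]
  set t := ‖x - b‖ with ht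
  have ht1 : t ≤ 1 := by simpa [dist_eq_norm] using hx
  have hsub : closedBall b t ⊆ closedBall b 1 := closedBall_subset_closedBall ht1
  have hbd : ∀ z ∈ closedBall b t, ‖fderiv ℝ g z‖ ≤ C * t := by
    intro z hz
    rw [hgderiv z]
    calc ‖fderiv ℝ G z - L‖ ≤ C * ‖z - b‖ := hlip z (hsub hz) b (mem_closedBall_self zero_le_one)
    _ ≤ C * t := by
        have : ‖z - b‖ ≤ t := by simpa [dist_eq_norm] using hz
        exact mul_le_mul_of_nonneg_left this hC
  have key : ‖g x - g b‖ ≤ C * t * ‖x - b‖ :=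
    (convex_closedBall b t).norm_image_sub_le_of_norm_fderiv_le
      (fun z _ => hgdiff z) hbd (mem_closedBall_self (norm_nonneg _)) (by simp [dist_eq_norm, ht])
  have : g x - g b = G x - G b - L (x - b) := by
    simp only [hg]
    rw [map_sub]
    abel
  rw [this] at key
  calc ‖G x - G b - L (x - b)‖ ≤ C * t * ‖x - b‖ := key
  _ = C * ‖x - b‖ ^ 2 := by rw [ht]; ring

end taylor

section normalize
variable {n : ℕ}
local notation "E" => EuclideanSpace ℝ (Fin n)

lemma normalize_lip {c : ℝ} (hc : 0 < c) {x y : E} (hx : c ≤ ‖x‖) (hy : c ≤ ‖y‖) :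
    ‖‖x‖⁻¹ • x - ‖y‖⁻¹ • y‖ ≤ (2 / c) * ‖x - y‖ := by
  have hx0 : (0:ℝ) < ‖x‖ := lt_of_lt_of_le hc hx
  have hy0 : (0:ℝ) < ‖y‖ := lt_of_lt_of_le hc hy
  have hdecomp : ‖x‖⁻¹ • x - ‖y‖⁻¹ • y = ‖x‖⁻¹ • (x - y) + (‖x‖⁻¹ - ‖y‖⁻¹) • y := by
    rw [smul_sub, sub_smul]; abel
  rw [hdecomp]
  have h1 : ‖‖x‖⁻¹ • (x - y)‖ = ‖x‖⁻¹ * ‖x - y‖ := by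
    rw [norm_smul, Real.norm_eq_abs, abs_of_pos (inv_pos.mpr hx0)]
  have h2 : ‖(‖x‖⁻¹ - ‖y‖⁻¹) • y‖ ≤ ‖x‖⁻¹ * ‖x - y‖ := by
    rw [norm_smul, Real.norm_eq_abs]
    have : |‖x‖⁻¹ - ‖y‖⁻¹| = |‖y‖ - ‖x‖| / (‖x‖ * ‖y‖) := by
      have heq : ‖x‖⁻¹ - ‖y‖⁻¹ = (‖y‖ - ‖x‖) / (‖x‖ * ‖y‖) := by field_simp
      rw [heq, abs_div, abs_of_pos (show (0:ℝ) < ‖x‖ * ‖y‖ by positivity)]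
    rw [this]
    have hnorm : |‖y‖ - ‖x‖| ≤ ‖x - y‖ := by
      rw [abs_sub_comm]
      exact abs_norm_sub_norm_le x y
    calc |‖y‖ - ‖x‖| / (‖x‖ * ‖y‖) * ‖y‖ = |‖y‖ - ‖x‖| / ‖x‖ := by field_simp
    _ ≤ ‖x - y‖ / ‖x‖ := by gcongr
    _ = ‖x‖⁻¹ * ‖x - y‖ := by rw [div_eq_inv_mul]
  calc ‖‖x‖⁻¹ • (x - y) + (‖x‖⁻¹ - ‖y‖⁻¹) • y‖
      ≤ ‖‖x‖⁻¹ • (x - y)‖ + ‖(‖x‖⁻¹ - ‖y‖⁻¹) • y‖ := norm_add_le _ _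
  _ ≤ ‖x‖⁻¹ * ‖x - y‖ + ‖x‖⁻¹ * ‖x - y‖ := by rw [h1]; exact add_le_add le_rfl h2
  _ = 2 * ‖x‖⁻¹ * ‖x - y‖ := by ring
  _ ≤ (2 / c) * ‖x - y‖ := by
      apply mul_le_mul_of_nonneg_right _ (norm_nonneg _)
      rw [div_eq_mul_inv]
      exact mul_le_mul_of_nonneg_left (inv_anti₀ hc hx) (by norm_num)

lemma normalize_inv_comp {B B' : E →L[ℝ] E}
    (hBB' : B.comp B' = ContinuousLinearMap.id ℝ E)
    {v : E} (hv : ‖v‖ = 1) :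
    ‖B (‖B' v‖⁻¹ • B' v)‖⁻¹ • B (‖B' v‖⁻¹ • B' v) = v := by
  have hid : B (B' v) = v := by
    have := congrArg (fun L : E →L[ℝ] E => L v) hBB'
    simpa using this
  have hv0 : v ≠ 0 := by intro h; rw [h, norm_zero] at hv; norm_num at hv
  have hB'v : B' v ≠ 0 := by
    intro h
    apply hv0
    rw [← hid, h, map_zero]
  have hn : (0:ℝ) < ‖B' v‖ := norm_pos_iff.mpr hB'v
  rw [ContinuousLinearMap.map_smul, hid, norm_smul, Real.norm_eq_abs, abs_of_pos (inv_pos.mpr hn), hv, mul_one,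
    inv_inv, smul_smul, mul_inv_cancel₀ (ne_of_gt hn), one_smul]

end normalize

/-- The `m`-th stratum of a closed set `A ⊆ ℝⁿ`:
`A^(m) = {a ∈ A : 0 < H^{n-m-1}(N(A, a)) < ∞}`. -/
def stratum {n : ℕ} (A : Set (EuclideanSpace ℝ (Fin n))) (m : ℕ) :
    Set (EuclideanSpace ℝ (Fin n)) :=
  {a | a ∈ A ∧ 0 < μH[((n - m - 1 : ℕ) : ℝ)] {u | (a, u) ∈ normalBundle A}
      ∧ μH[((n - m - 1 : ℕ) : ℝ)] {u | (a, u) ∈ normalBundle A} ≠ ⊤}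

section transfer
variable {n : ℕ}
local notation "E" => EuclideanSpace ℝ (Fin n)

set_option maxHeartbeats 1600000 in
lemma normal_transfer {A : Set E} {F G : E → E}
    (hF : ContDiff ℝ 2 F) (hG : ContDiff ℝ 2 G)
    (hGF : ∀ x, G (F x) = x) (hFG : ∀ x, F (G x) = x)
    {a u : E} (h : (a, u) ∈ normalBundle A) :
    (F a, ‖ContinuousLinearMap.adjoint (fderiv ℝ G (F a)) u‖⁻¹ •
      ContinuousLinearMap.adjoint (fderiv ℝ G (F a)) u) ∈ normalBundle (F '' A) := by
  obtain ⟨ha, hu, s, hs, hds⟩ := h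
  set b := F a with hb
  set D := fderiv ℝ G b with hD
  set B := ContinuousLinearMap.adjoint D with hBdef
  -- inverse relations
  have hDF : D.comp (fderiv ℝ F a) = ContinuousLinearMap.id ℝ E := comp_fderiv_id hF hG hGF a
  have hFD : (fderiv ℝ F a).comp D = ContinuousLinearMap.id ℝ E := by
    have := comp_fderiv_id hG hF hFG b
    rwa [show G b = a from hGF a] at this
  have hBinv : (ContinuousLinearMap.adjoint (fderiv ℝ F a)).comp B
      = ContinuousLinearMap.id ℝ E := adjoint_inv hDF
  have hu0 : u ≠ 0 := by intro h0; rw [h0, norm_zero] at hu; norm_num at hu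
  have hBu : B u ≠ 0 := by
    intro h0
    apply hu0
    have := congrArg (fun L : E →L[ℝ] E => L u) hBinv
    simp only [ContinuousLinearMap.comp_apply, ContinuousLinearMap.id_apply] at this
    rw [← this, h0, map_zero]
  set lam := ‖B u‖ with hlamdef
  have hlam : 0 < lam := norm_pos_iff.mpr hBu
  set ν := lam⁻¹ • B u with hνdef
  have hν : ‖ν‖ = 1 := by
    rw [hνdef, norm_smul, Real.norm_eq_abs, abs_of_pos (inv_pos.mpr hlam)]
    exact inv_mul_cancel₀ (ne_of_gt hlam)
  -- Taylor bound for G at b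
  obtain ⟨C, hC, hTay⟩ := taylor2 hG b
  set M := ‖D‖ + C + 1 with hM
  have hM0 : 0 < M := by positivity
  set Q := C + M ^ 2 / (2 * s) with hQ
  have hQ0 : 0 < Q := by positivity
  set r := min (1/2 : ℝ) (lam / (2 * Q)) with hr
  have hr0 : 0 < r := lt_min (by norm_num) (by positivity)
  have hr1 : 2 * r ≤ 1 := by
    have : r ≤ 1/2 := min_le_left _ _
    linarith
  have hrQ : Q ≤ lam / (2 * r) := by
    have h1 : r ≤ lam / (2 * Q) := min_le_right _ _
    rw [le_div_iff₀ (by positivity)]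
    rw [le_div_iff₀ (by positivity)] at h1
    nlinarith
  refine ⟨Set.mem_image_of_mem F ha, hν, r, hr0, ?_⟩
  apply le_antisymm
  · calc infDist (b + r • ν) (F '' A) ≤ dist (b + r • ν) b :=
        infDist_le_dist_of_mem (Set.mem_image_of_mem F ha)
    _ = r := by
        rw [dist_eq_norm, add_sub_cancel_left, norm_smul, Real.norm_eq_abs,
          abs_of_pos hr0, hν, mul_one]
  · rw [← not_lt]
    intro hlt
    rw [infDist_lt_iff ⟨b, Set.mem_image_of_mem F ha⟩] at hlt
    obtain ⟨x, hxA, hxd⟩ := hlt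
    obtain ⟨a', ha', rfl⟩ := hxA
    -- notation
    set x := F a' with hx
    set w := x - b with hw
    set t := ‖w‖ with htdef
    -- step 1 : ⟪w, ν⟫ > t²/(2r)
    have hexp : t ^ 2 - 2 * (r * ⟪w, ν⟫) + r ^ 2 < r ^ 2 := by
      have h1 : ‖w - r • ν‖ < r := by
        have : b + r • ν - x = -(w - r • ν) := by rw [hw]; abel
        calc ‖w - r • ν‖ = ‖b + r • ν - x‖ := by rw [this, norm_neg]
        _ = dist (b + r • ν) x := (dist_eq_norm _ _).symm
        _ < r := hxd
      have h2 : ‖w - r • ν‖ ^ 2 < r ^ 2 := by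
        apply sq_lt_sq' _ h1
        linarith [norm_nonneg (w - r • ν)]
      rw [norm_sub_sq_real, real_inner_smul_right] at h2
      have h3 : ‖r • ν‖ = r := by
        rw [norm_smul, Real.norm_eq_abs, abs_of_pos hr0, hν, mul_one]
      rw [h3] at h2
      calc t ^ 2 - 2 * (r * ⟪w, ν⟫) + r ^ 2 = ‖w‖ ^ 2 - 2 * (r * ⟪w, ν⟫) + r ^ 2 := by
            rw [htdef]
      _ < r ^ 2 := h2
    have hinner : t ^ 2 < 2 * r * ⟪w, ν⟫ := by nlinarith
    have ht0 : 0 < t := by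
      rcases eq_or_lt_of_le (norm_nonneg w) with h0 | h0
      · exfalso
        have hw0 : w = 0 := by rwa [eq_comm, norm_eq_zero] at h0
        rw [htdef, hw0] at hinner
        simp [inner_zero_left] at hinner
      · exact h0
    have ht1 : t ≤ 1 := by
      have h3 : ‖r • ν‖ = r := by
        rw [norm_smul, Real.norm_eq_abs, abs_of_pos hr0, hν, mul_one]
      have h5 : ‖x - b‖ ≤ ‖b + r • ν - x‖ + ‖r • ν‖ := by
        have heq : x - b = -((b + r • ν - x) - r • ν) := by abel
        rw [heq, norm_neg]
        exact norm_sub_le _ _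
      rw [h3] at h5
      have h4 : ‖b + r • ν - x‖ < r := by rw [← dist_eq_norm]; exact hxd
      have h6 : t = ‖x - b‖ := by rw [htdef, hw]
      linarith
    -- Taylor estimate
    have hxball : x ∈ closedBall b 1 := by
      rw [mem_closedBall, dist_eq_norm]
      exact ht1
    have hTx : ‖G x - G b - D (x - b)‖ ≤ C * t ^ 2 := by
      have := hTay x hxball
      rwa [← htdef, ← hw] at this
    have hGx : G x = a' := hGF a'
    have hGb : G b = a := hGF a
    rw [hGx, hGb, ← hw] at hTx
    set e := a' - a - D w with he
    have he_eq : a' - a = D w + e := by rw [he]; abel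
    -- inner product estimate
    have hDwu : ⟪D w, u⟫ = lam * ⟪w, ν⟫ := by
      have h1 : ⟪B u, w⟫ = ⟪u, D w⟫ := ContinuousLinearMap.adjoint_inner_left D w u
      have h2 : B u = lam • ν := by
        rw [hνdef, smul_smul, mul_inv_cancel₀ (ne_of_gt hlam), one_smul]
      calc ⟪D w, u⟫ = ⟪u, D w⟫ := real_inner_comm _ _
      _ = ⟪B u, w⟫ := h1.symm
      _ = ⟪lam • ν, w⟫ := by rw [h2]
      _ = lam * ⟪ν, w⟫ := real_inner_smul_left _ _ _
      _ = lam * ⟪w, ν⟫ := by rw [real_inner_comm]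
    have hinner2 : ⟪a' - a, u⟫ > lam * (t ^ 2 / (2 * r)) - C * t ^ 2 := by
      have h1 : ⟪a' - a, u⟫ = ⟪D w, u⟫ + ⟪e, u⟫ := by
        rw [he_eq, inner_add_left]
      have h2 : |⟪e, u⟫| ≤ C * t ^ 2 := by
        calc |⟪e, u⟫| ≤ ‖e‖ * ‖u‖ := abs_real_inner_le_norm _ _
        _ = ‖e‖ := by rw [hu, mul_one]
        _ ≤ C * t ^ 2 := hTx
      have h3 : lam * ⟪w, ν⟫ > lam * (t ^ 2 / (2 * r)) := by
        apply mul_lt_mul_of_pos_left _ hlam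
        rw [div_lt_iff₀ (by positivity)]
        nlinarith
      have h4 : ⟪e, u⟫ ≥ -(C * t ^ 2) := by
        have := abs_le.mp h2
        linarith [this.1]
      rw [h1, hDwu]
      linarith
    -- norm estimate
    have hnorm : ‖a' - a‖ ≤ M * t := by
      calc ‖a' - a‖ = ‖D w + e‖ := by rw [he_eq]
      _ ≤ ‖D w‖ + ‖e‖ := norm_add_le _ _
      _ ≤ ‖D‖ * t + C * t ^ 2 := by
          apply add_le_add _ hTx
          calc ‖D w‖ ≤ ‖D‖ * ‖w‖ := D.le_opNorm w
          _ = ‖D‖ * t := by rw [htdef]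
      _ ≤ ‖D‖ * t + C * t := by
          have : t ^ 2 ≤ t := by nlinarith
          nlinarith
      _ ≤ M * t := by rw [hM]; nlinarith
    -- conclude : dist a' (a + s • u) < s
    have hkey : ⟪a' - a, u⟫ > ‖a' - a‖ ^ 2 / (2 * s) := by
      have h1 : lam * (t ^ 2 / (2 * r)) - C * t ^ 2 ≥ M ^ 2 * t ^ 2 / (2 * s) := by
        have h2 : Q ≤ lam / (2 * r) := hrQ
        have h4 : Q * t ^ 2 ≤ (lam / (2 * r)) * t ^ 2 :=
          mul_le_mul_of_nonneg_right h2 (sq_nonneg t)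
        have h7 : Q * t ^ 2 = C * t ^ 2 + M ^ 2 * t ^ 2 / (2 * s) := by rw [hQ]; ring
        have h8 : lam * (t ^ 2 / (2 * r)) = (lam / (2 * r)) * t ^ 2 := by ring
        linarith
      have h5 : ‖a' - a‖ ^ 2 ≤ M ^ 2 * t ^ 2 := by nlinarith [norm_nonneg (a' - a)]
      have h6 : ‖a' - a‖ ^ 2 / (2 * s) ≤ M ^ 2 * t ^ 2 / (2 * s) := by gcongr
      linarith
    have hfar : dist a' (a + s • u) < s := by
      rw [dist_eq_norm]
      have h1 : a' - (a + s • u) = (a' - a) - s • u := by abel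
      rw [h1]
      have h2 : ‖(a' - a) - s • u‖ ^ 2 < s ^ 2 := by
        rw [norm_sub_sq_real, real_inner_smul_right]
        have h3 : ‖s • u‖ = s := by
          rw [norm_smul, Real.norm_eq_abs, abs_of_pos hs, hu, mul_one]
        rw [h3]
        have h4 : ⟪a' - a, u⟫ * (2 * s) > ‖a' - a‖ ^ 2 := by
          have := (div_lt_iff₀ (by positivity : (0:ℝ) < 2 * s)).mp hkey
          linarith
        nlinarith
      have h5 : ‖(a' - a) - s • u‖ < s := by
        nlinarith [norm_nonneg ((a' - a) - s • u)]
      exact h5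
    have h9 : infDist (a + s • u) A ≤ dist (a + s • u) a' := infDist_le_dist_of_mem ha'
    have h10 : infDist (a + s • u) A = s := hds
    rw [dist_comm] at h9
    linarith

end transfer

section fiber
variable {n : ℕ}
local notation "E" => EuclideanSpace ℝ (Fin n)

lemma image_image_G {A : Set E} {F G : E → E} (hGF : ∀ x, G (F x) = x) :
    G '' (F '' A) = A := by
  rw [Set.image_image]
  simp only [hGF, Set.image_id']

lemma fiber_eq {A : Set E} {F G : E → E}
    (hF : ContDiff ℝ 2 F) (hG : ContDiff ℝ 2 G)
    (hGF : ∀ x, G (F x) = x) (hFG : ∀ x, F (G x) = x) (a : E) :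
    {v | (F a, v) ∈ normalBundle (F '' A)} =
      (fun u => ‖ContinuousLinearMap.adjoint (fderiv ℝ G (F a)) u‖⁻¹ •
        ContinuousLinearMap.adjoint (fderiv ℝ G (F a)) u) '' {u | (a, u) ∈ normalBundle A} := by
  have hFD : (fderiv ℝ F a).comp (fderiv ℝ G (F a)) = ContinuousLinearMap.id ℝ E := by
    have := comp_fderiv_id hG hF hFG (F a)
    rwa [hGF a] at this
  have hBB' : (ContinuousLinearMap.adjoint (fderiv ℝ G (F a))).comp
      (ContinuousLinearMap.adjoint (fderiv ℝ F a)) = ContinuousLinearMap.id ℝ E :=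
    adjoint_inv hFD
  ext v
  constructor
  · intro hv
    have hv1 : ‖v‖ = 1 := hv.2.1
    have h2 := normal_transfer (A := F '' A) hG hF hFG hGF (a := F a) (u := v) hv
    rw [hGF a, image_image_G hGF] at h2
    exact ⟨_, h2, normalize_inv_comp hBB' hv1⟩
  · rintro ⟨u, hu, rfl⟩
    exact normal_transfer hF hG hGF hFG hu

lemma lip_bound {B B' : E →L[ℝ] E} (hB'B : B'.comp B = ContinuousLinearMap.id ℝ E)
    {S : Set E} (hS : ∀ u ∈ S, ‖u‖ = 1) :
    ∃ K : ℝ≥0, LipschitzOnWith K (fun u => ‖B u‖⁻¹ • B u) S := by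
  set c := 1 / (‖B'‖ + 1) with hc
  have hp : (0:ℝ) < ‖B'‖ + 1 := by positivity
  have hc0 : 0 < c := by positivity
  have hlb : ∀ u ∈ S, c ≤ ‖B u‖ := by
    intro u hu
    have h1 : B' (B u) = u := by
      have := congrArg (fun L : E →L[ℝ] E => L u) hB'B
      simpa using this
    have h2 : (1:ℝ) ≤ ‖B'‖ * ‖B u‖ := by
      calc (1:ℝ) = ‖u‖ := (hS u hu).symm
      _ = ‖B' (B u)‖ := by rw [h1]
      _ ≤ ‖B'‖ * ‖B u‖ := B'.le_opNorm _
    rw [hc, div_le_iff₀ hp]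
    nlinarith [norm_nonneg (B u)]
  refine ⟨Real.toNNReal (2 / c * ‖B‖), ?_⟩
  rw [lipschitzOnWith_iff_dist_le_mul]
  intro u hu v hv
  rw [dist_eq_norm, dist_eq_norm]
  have h3 : ‖‖B u‖⁻¹ • B u - ‖B v‖⁻¹ • B v‖ ≤ (2 / c) * ‖B u - B v‖ :=
    normalize_lip hc0 (hlb u hu) (hlb v hv)
  have h4 : ‖B u - B v‖ ≤ ‖B‖ * ‖u - v‖ := by
    rw [← map_sub]
    exact B.le_opNorm _
  have h5 : ((Real.toNNReal (2 / c * ‖B‖) : ℝ≥0) : ℝ) = 2 / c * ‖B‖ :=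
    Real.coe_toNNReal _ (by positivity)
  rw [h5]
  calc ‖‖B u‖⁻¹ • B u - ‖B v‖⁻¹ • B v‖ ≤ (2 / c) * ‖B u - B v‖ := h3
  _ ≤ (2 / c) * (‖B‖ * ‖u - v‖) := by
      apply mul_le_mul_of_nonneg_left h4 (by positivity)
  _ = 2 / c * ‖B‖ * ‖u - v‖ := by ring

lemma image_sphere {B B' : E →L[ℝ] E} (hB'B : B'.comp B = ContinuousLinearMap.id ℝ E)
    {S : Set E} (hS : ∀ u ∈ S, ‖u‖ = 1) :
    ∀ v ∈ (fun u => ‖B u‖⁻¹ • B u) '' S, ‖v‖ = 1 := by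
  rintro v ⟨u, hu, rfl⟩
  have h1 : B' (B u) = u := by
    have := congrArg (fun L : E →L[ℝ] E => L u) hB'B
    simpa using this
  have hu0 : u ≠ 0 := by
    intro h
    have h2 := hS u hu
    rw [h, norm_zero] at h2
    norm_num at h2
  have hBu : B u ≠ 0 := by
    intro h; apply hu0; rw [← h1, h, map_zero]
  have hn : (0:ℝ) < ‖B u‖ := norm_pos_iff.mpr hBu
  simp only [norm_smul, Real.norm_eq_abs, abs_of_pos (inv_pos.mpr hn)]
  exact inv_mul_cancel₀ (ne_of_gt hn)

lemma measure_transfer {d : ℝ} (hd : 0 ≤ d) {B B' : E →L[ℝ] E}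
    (hBB' : B.comp B' = ContinuousLinearMap.id ℝ E)
    (hB'B : B'.comp B = ContinuousLinearMap.id ℝ E)
    {S : Set E} (hS : ∀ u ∈ S, ‖u‖ = 1)
    (h : 0 < μH[d] S ∧ μH[d] S ≠ ⊤) :
    0 < μH[d] ((fun u => ‖B u‖⁻¹ • B u) '' S) ∧
      μH[d] ((fun u => ‖B u‖⁻¹ • B u) '' S) ≠ ⊤ := by
  obtain ⟨K, hK⟩ := lip_bound hB'B hS
  set T := fun u : E => ‖B u‖⁻¹ • B u with hT
  set S' := T '' S with hS'
  have hS'sphere : ∀ v ∈ S', ‖v‖ = 1 := image_sphere hB'B hS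
  obtain ⟨K', hK'⟩ := lip_bound (B := B') (B' := B) hBB' hS'sphere
  have hup : μH[d] S' ≤ (K : ℝ≥0∞) ^ d * μH[d] S := hK.hausdorffMeasure_image_le hd
  have hSsub : S ⊆ (fun v => ‖B' v‖⁻¹ • B' v) '' S' := by
    intro u hu
    refine ⟨T u, Set.mem_image_of_mem T hu, ?_⟩
    exact normalize_inv_comp hB'B (hS u hu)
  have hdown : μH[d] S ≤ (K' : ℝ≥0∞) ^ d * μH[d] S' := by
    calc μH[d] S ≤ μH[d] ((fun v => ‖B' v‖⁻¹ • B' v) '' S') := measure_mono hSsub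
    _ ≤ (K' : ℝ≥0∞) ^ d * μH[d] S' := hK'.hausdorffMeasure_image_le hd
  constructor
  · by_contra h0
    push_neg at h0
    have h1 : μH[d] S' = 0 := le_antisymm h0 zero_le
    rw [h1, mul_zero] at hdown
    exact absurd (le_antisymm hdown zero_le) (ne_of_gt h.1)
  · have h2 : (K : ℝ≥0∞) ^ d * μH[d] S < ⊤ :=
      ENNReal.mul_lt_top (ENNReal.rpow_lt_top_of_nonneg hd ENNReal.coe_ne_top)
        (lt_top_iff_ne_top.mpr h.2)
    exact ne_top_of_le_ne_top (ne_of_lt h2) hup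

end fiber

/-- If `A ⊆ ℝⁿ` is closed and `F : ℝⁿ → ℝⁿ` is a `C²` diffeomorphism of `ℝⁿ` onto `ℝⁿ` with
inverse `G`, then `F(A^(m)) = (F(A))^(m)` for every `0 ≤ m ≤ n - 1`. -/
theorem stmt2 {n : ℕ} (hn : 1 ≤ n) (A : Set (EuclideanSpace ℝ (Fin n))) (hA : IsClosed A)
    (F G : EuclideanSpace ℝ (Fin n) → EuclideanSpace ℝ (Fin n))
    (hF : ContDiff ℝ 2 F) (hG : ContDiff ℝ 2 G)
    (hGF : ∀ x, G (F x) = x) (hFG : ∀ x, F (G x) = x)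
    (m : ℕ) (hm : m ≤ n - 1) :
    F '' stratum A m = stratum (F '' A) m := by
  have hd : (0:ℝ) ≤ ((n - m - 1 : ℕ) : ℝ) := Nat.cast_nonneg _
  ext b
  simp only [stratum, Set.mem_image, Set.mem_setOf_eq]
  constructor
  · rintro ⟨a, ⟨haA, hpos, hfin⟩, rfl⟩
    have hFD : (fderiv ℝ F a).comp (fderiv ℝ G (F a))
        = ContinuousLinearMap.id ℝ (EuclideanSpace ℝ (Fin n)) := by
      have := comp_fderiv_id hG hF hFG (F a)
      rwa [hGF a] at this
    have hDF := comp_fderiv_id hF hG hGF a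
    have hBB' := adjoint_inv hFD
    have hB'B := adjoint_inv hDF
    have hSsph : ∀ u ∈ {u | (a, u) ∈ normalBundle A}, ‖u‖ = 1 := fun u hu => hu.2.1
    have hfib := fiber_eq (A := A) hF hG hGF hFG a
    have hmt := measure_transfer hd hBB' hB'B hSsph ⟨hpos, hfin⟩
    rw [← hfib] at hmt
    exact ⟨⟨a, haA, rfl⟩, hmt.1, hmt.2⟩
  · rintro ⟨⟨a, haA, rfl⟩, hpos, hfin⟩
    have hFD : (fderiv ℝ F a).comp (fderiv ℝ G (F a))
        = ContinuousLinearMap.id ℝ (EuclideanSpace ℝ (Fin n)) := by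
      have := comp_fderiv_id hG hF hFG (F a)
      rwa [hGF a] at this
    have hDF := comp_fderiv_id hF hG hGF a
    have hBB' := adjoint_inv hFD
    have hB'B := adjoint_inv hDF
    have hsph2 : ∀ v ∈ {v | (F a, v) ∈ normalBundle (F '' A)}, ‖v‖ = 1 := fun v hv => hv.2.1
    have hfib := fiber_eq (A := F '' A) (F := G) (G := F) hG hF hFG hGF (F a)
    rw [hGF a, image_image_G hGF] at hfib
    have hmt := measure_transfer hd hB'B hBB' hsph2 ⟨hpos, hfin⟩
    rw [← hfib] at hmt
    exact ⟨a, ⟨haA, hmt.1, hmt.2⟩, rfl⟩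
end

section
/- Let n ≥ 1, let A ⊆ ℝⁿ be a closed set, let Ω ⊆ ℝⁿ be an open set, and let C = Clos(A ∩ Ω) be the closure of A ∩ Ω in ℝⁿ. Then the generalized unit normal bundles of A and of C agree over Ω: {(a,u) ∈ N(A) : a ∈ Ω} = {(a,u) ∈ N(C) : a ∈ Ω}. -/
open MeasureTheory Metric

lemma le_infDist' {X : Type*} [PseudoMetricSpace X] {S : Set X} {x : X} {c : ℝ}
    (hS : S.Nonempty) (h : ∀ b ∈ S, c ≤ dist x b) : c ≤ Metric.infDist x S := by
  rw [Metric.infDist_eq_iInf]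
  haveI := hS.to_subtype
  exact le_ciInf fun b => h b b.2

lemma shrink_aux {n : ℕ} {S : Set (EuclideanSpace ℝ (Fin n))} {a u : EuclideanSpace ℝ (Fin n)}
    (ha : a ∈ S) (hu : ‖u‖ = 1) {s s' : ℝ} (hs' : 0 < s') (hle : s' ≤ s)
    (hd : Metric.infDist (a + s • u) S = s) : Metric.infDist (a + s' • u) S = s' := by
  have hdista : dist (a + s' • u) a = s' := by
    simp [dist_eq_norm, norm_smul, hu, abs_of_pos hs']
  apply le_antisymm
  · calc Metric.infDist (a + s' • u) S ≤ dist (a + s' • u) a :=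
        Metric.infDist_le_dist_of_mem ha
    _ = s' := hdista
  · refine le_infDist' ⟨a, ha⟩ fun b hb => ?_
    have h1 : s ≤ dist (a + s • u) b :=
      le_of_eq_of_le hd.symm (Metric.infDist_le_dist_of_mem hb)
    have h2 : dist (a + s • u) (a + s' • u) = s - s' := by
      have : (a + s • u) - (a + s' • u) = (s - s') • u := by
        rw [sub_smul]; abel
      rw [dist_eq_norm, this, norm_smul, hu]
      simp [abs_of_nonneg (sub_nonneg.mpr hle)]
    have := dist_triangle (a + s • u) (a + s' • u) b
    linarith

/-- If `A ⊆ ℝⁿ` is closed, `Ω ⊆ ℝⁿ` is open and `C = Clos(A ∩ Ω)`, then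
`N(A)|Ω = N(C)|Ω`. -/
theorem stmt3 {n : ℕ} (hn : 1 ≤ n) (A : Set (EuclideanSpace ℝ (Fin n))) (hA : IsClosed A)
    (Ω : Set (EuclideanSpace ℝ (Fin n))) (hΩ : IsOpen Ω) :
    {p ∈ normalBundle A | p.1 ∈ Ω} = {p ∈ normalBundle (closure (A ∩ Ω)) | p.1 ∈ Ω} := by
  set C := closure (A ∩ Ω) with hC
  have hCA : C ⊆ A := closure_minimal Set.inter_subset_left hA
  ext ⟨a, u⟩
  simp only [normalBundle, Set.mem_setOf_eq, Set.sep_setOf]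
  constructor
  · rintro ⟨⟨haA, hu, s, hs, hd⟩, haΩ⟩
    have haC : a ∈ C := subset_closure ⟨haA, haΩ⟩
    refine ⟨⟨haC, hu, s, hs, le_antisymm ?_ ?_⟩, haΩ⟩
    · calc Metric.infDist (a + s • u) C ≤ dist (a + s • u) a :=
          Metric.infDist_le_dist_of_mem haC
      _ = s := by simp [dist_eq_norm, norm_smul, hu, abs_of_pos hs]
    · calc s = Metric.infDist (a + s • u) A := hd.symm
      _ ≤ Metric.infDist (a + s • u) C :=
          Metric.infDist_le_infDist_of_subset hCA ⟨a, haC⟩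
  · rintro ⟨⟨haC, hu, s, hs, hd⟩, haΩ⟩
    have haA : a ∈ A := hCA haC
    obtain ⟨r, hr, hball⟩ := Metric.isOpen_iff.mp hΩ a haΩ
    set s' := min s (r / 3) with hs'def
    have hs' : 0 < s' := lt_min hs (by linarith)
    have hs'le : s' ≤ s := min_le_left _ _
    have hs'r : s' ≤ r / 3 := min_le_right _ _
    have hdC : Metric.infDist (a + s' • u) C = s' := shrink_aux haC hu hs' hs'le hd
    refine ⟨⟨haA, hu, s', hs', le_antisymm ?_ ?_⟩, haΩ⟩
    · calc Metric.infDist (a + s' • u) A ≤ dist (a + s' • u) a :=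
          Metric.infDist_le_dist_of_mem haA
      _ = s' := by simp [dist_eq_norm, norm_smul, hu, abs_of_pos hs']
    · refine le_infDist' ⟨a, haA⟩ fun b hb => ?_
      by_contra hlt
      push_neg at hlt
      have hdab : dist (a + s' • u) a = s' := by
        simp [dist_eq_norm, norm_smul, hu, abs_of_pos hs']
      have hba : dist a b < 2 * s' := by
        have := dist_triangle a (a + s' • u) b
        rw [dist_comm a (a + s' • u), hdab] at this
        linarith
      have hbΩ : b ∈ Ω := hball (by rw [Metric.mem_ball, dist_comm]; linarith)
      have hbC : b ∈ C := subset_closure ⟨hb, hbΩ⟩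
      have : s' ≤ dist (a + s' • u) b :=
        le_of_eq_of_le hdC.symm (Metric.infDist_le_dist_of_mem hbC)
      linarith
end

section
/- Let n ≥ 1, let A ⊆ ℝⁿ be a closed set, let Ω ⊆ ℝⁿ be an open set, and let C = Clos(A ∩ Ω) be the closure of A ∩ Ω in ℝⁿ. Then for every integer 0 ≤ m ≤ n−1 the strata of A and of C agree on Ω: A^(m) ∩ Ω = C^(m) ∩ Ω. -/
open MeasureTheory Metric

lemma dist_add_smul {n : ℕ} (a u : EuclideanSpace ℝ (Fin n)) (hu : ‖u‖ = 1)
    {t : ℝ} (ht : 0 ≤ t) : dist (a + t • u) a = t := by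
  rw [dist_eq_norm, add_sub_cancel_left, norm_smul, hu, mul_one, Real.norm_eq_abs,
    abs_of_nonneg ht]

/-- If the normal condition holds at scale `s`, it holds at every smaller positive scale. -/
lemma shrink {n : ℕ} {A : Set (EuclideanSpace ℝ (Fin n))} {a u : EuclideanSpace ℝ (Fin n)}
    (ha : a ∈ A) (hu : ‖u‖ = 1) {s t : ℝ} (hinf : Metric.infDist (a + s • u) A = s)
    (ht : 0 < t) (hts : t ≤ s) : Metric.infDist (a + t • u) A = t := by
  have hle : Metric.infDist (a + t • u) A ≤ t := by
    calc Metric.infDist (a + t • u) A ≤ dist (a + t • u) a := Metric.infDist_le_dist_of_mem ha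
    _ = t := dist_add_smul a u hu ht.le
  have hge : t ≤ Metric.infDist (a + t • u) A := by
    have h1 : Metric.infDist (a + s • u) A ≤ Metric.infDist (a + t • u) A
        + dist (a + s • u) (a + t • u) := Metric.infDist_le_infDist_add_dist
    have h2 : dist (a + s • u) (a + t • u) = s - t := by
      rw [dist_eq_norm]
      have : a + s • u - (a + t • u) = (s - t) • u := by
        rw [sub_smul]; abel
      rw [this, norm_smul, hu, mul_one, Real.norm_eq_abs, abs_of_nonneg (by linarith)]
    rw [hinf, h2] at h1
    linarith
  linarith

/-- For `a ∈ A ∩ Ω`, the normal fibers of `A` and of `closure (A ∩ Ω)` at `a` agree. -/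
lemma fiber_eq_s4 {n : ℕ} {A Ω : Set (EuclideanSpace ℝ (Fin n))} (hA : IsClosed A)
    (hΩ : IsOpen Ω) {a : EuclideanSpace ℝ (Fin n)} (haA : a ∈ A) (haΩ : a ∈ Ω) :
    {u | (a, u) ∈ normalBundle A} = {u | (a, u) ∈ normalBundle (closure (A ∩ Ω))} := by
  have hCA : closure (A ∩ Ω) ⊆ A :=
    hA.closure_subset_iff.mpr Set.inter_subset_left
  have haC : a ∈ closure (A ∩ Ω) := subset_closure ⟨haA, haΩ⟩
  ext u
  simp only [Set.mem_setOf_eq, normalBundle]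
  constructor
  · rintro ⟨-, hu, s, hs, hinf⟩
    refine ⟨haC, hu, s, hs, le_antisymm ?_ ?_⟩
    · calc Metric.infDist (a + s • u) (closure (A ∩ Ω)) ≤ dist (a + s • u) a :=
        Metric.infDist_le_dist_of_mem haC
      _ = s := dist_add_smul a u hu hs.le
    · calc s = Metric.infDist (a + s • u) A := hinf.symm
      _ ≤ Metric.infDist (a + s • u) (closure (A ∩ Ω)) :=
        Metric.infDist_le_infDist_of_subset hCA ⟨a, haC⟩
  · rintro ⟨-, hu, s, hs, hinf⟩
    obtain ⟨r, hr, hball⟩ := Metric.isOpen_iff.mp hΩ a haΩ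
    set t := min s (r / 3) with htdef
    have ht : 0 < t := lt_min hs (by linarith)
    have hts : t ≤ s := min_le_left _ _
    have htr : t ≤ r / 3 := min_le_right _ _
    have hinft : Metric.infDist (a + t • u) (closure (A ∩ Ω)) = t :=
      shrink haC hu hinf ht hts
    refine ⟨haA, hu, t, ht, le_antisymm ?_ ?_⟩
    · calc Metric.infDist (a + t • u) A ≤ dist (a + t • u) a :=
        Metric.infDist_le_dist_of_mem haA
      _ = t := dist_add_smul a u hu ht.le
    · by_contra hlt
      push_neg at hlt
      obtain ⟨b, hbA, hbd⟩ := (Metric.infDist_lt_iff ⟨a, haA⟩).mp hlt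
      have h1 : dist (a + t • u) a = t := dist_add_smul a u hu ht.le
      have hba : dist b a < r := by
        calc dist b a ≤ dist b (a + t • u) + dist (a + t • u) a := dist_triangle _ _ _
        _ < t + t := by rw [h1, dist_comm]; linarith
        _ ≤ r := by linarith
      have hbC : b ∈ closure (A ∩ Ω) := subset_closure ⟨hbA, hball (Metric.mem_ball.mpr hba)⟩
      have hlt2 : Metric.infDist (a + t • u) (closure (A ∩ Ω)) < t :=
        lt_of_le_of_lt (Metric.infDist_le_dist_of_mem hbC) hbd
      linarith

/-- If `A ⊆ ℝⁿ` is closed, `Ω ⊆ ℝⁿ` is open and `C = Clos(A ∩ Ω)`, then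
`A^(m) ∩ Ω = C^(m) ∩ Ω` for every `0 ≤ m ≤ n - 1`. -/
theorem stmt4 {n : ℕ} (hn : 1 ≤ n) (A : Set (EuclideanSpace ℝ (Fin n))) (hA : IsClosed A)
    (Ω : Set (EuclideanSpace ℝ (Fin n))) (hΩ : IsOpen Ω)
    (m : ℕ) (hm : m ≤ n - 1) :
    stratum A m ∩ Ω = stratum (closure (A ∩ Ω)) m ∩ Ω := by
  have hCA : closure (A ∩ Ω) ⊆ A :=
    hA.closure_subset_iff.mpr Set.inter_subset_left
  ext a
  simp only [Set.mem_inter_iff, stratum, Set.mem_setOf_eq]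
  constructor
  · rintro ⟨⟨haA, h1, h2⟩, haΩ⟩
    rw [fiber_eq_s4 hA hΩ haA haΩ] at h1 h2
    exact ⟨⟨subset_closure ⟨haA, haΩ⟩, h1, h2⟩, haΩ⟩
  · rintro ⟨⟨haC, h1, h2⟩, haΩ⟩
    have haA : a ∈ A := hCA haC
    rw [← fiber_eq_s4 hA hΩ haA haΩ] at h1 h2
    exact ⟨⟨haA, h1, h2⟩, haΩ⟩
end

section
/- Let 1 ≤ m < n be integers, let A ⊆ ℝⁿ be a closed set, let Ω ⊆ ℝⁿ be an open set, and let C = Clos(A ∩ Ω) be the closure of A ∩ Ω in ℝⁿ. If N(A) satisfies the m-dimensional Lusin (N) condition in Ω, then N(C) satisfies the m-dimensional Lusin (N) condition in Ω. -/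
open MeasureTheory Metric

/-- `N(A)` satisfies the `m`-dimensional Lusin (N) condition in the open set `Ω`:
`H^{n-1}(N(A)|S) = 0` whenever `S ⊆ A ∩ Ω` satisfies `H^m(A^(m) ∩ S) = 0`. -/
def LusinN {n : ℕ} (A : Set (EuclideanSpace ℝ (Fin n))) (m : ℕ)
    (Ω : Set (EuclideanSpace ℝ (Fin n))) : Prop :=
  ∀ S : Set (EuclideanSpace ℝ (Fin n)), S ⊆ A ∩ Ω →
    μH[(m : ℝ)] (stratum A m ∩ S) = 0 →
      μH[((n : ℝ) - 1)] {p | p ∈ normalBundle A ∧ p.1 ∈ S} = 0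

set_option maxHeartbeats 1000000

/-- Distance from `a + t • u` to `a` when `‖u‖ = 1` and `0 ≤ t`. -/
lemma dist_add_smul_unit {E : Type*} [NormedAddCommGroup E] [NormedSpace ℝ E]
    (a : E) {u : E} (hu : ‖u‖ = 1) {t : ℝ} (ht : 0 ≤ t) :
    dist (a + t • u) a = t := by
  rw [dist_eq_norm, add_sub_cancel_left, norm_smul, hu, mul_one, Real.norm_eq_abs,
    abs_of_nonneg ht]

/-- Segment property: if `δ_A(a + s u) = s` with `a ∈ A`, `‖u‖ = 1`, then
`δ_A(a + s' u) = s'` for all `0 < s' ≤ s`. -/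
lemma seg_infDist {n : ℕ} {A : Set (EuclideanSpace ℝ (Fin n))}
    {a u : EuclideanSpace ℝ (Fin n)} (ha : a ∈ A) (hu : ‖u‖ = 1)
    {s s' : ℝ} (hs' : 0 < s') (hle : s' ≤ s)
    (h : Metric.infDist (a + s • u) A = s) :
    Metric.infDist (a + s' • u) A = s' := by
  have hne : A.Nonempty := ⟨a, ha⟩
  have hdista : dist (a + s' • u) a = s' := dist_add_smul_unit a hu hs'.le
  have hub : Metric.infDist (a + s' • u) A ≤ s' := by
    simpa [hdista] using Metric.infDist_le_dist_of_mem (x := a + s' • u) ha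
  refine le_antisymm hub ?_
  by_contra hlt
  push_neg at hlt
  obtain ⟨b, hb, hdb⟩ := (Metric.infDist_lt_iff hne).1 hlt
  have hseg : dist (a + s • u) (a + s' • u) = s - s' := by
    have : (a + s • u) - (a + s' • u) = (s - s') • u := by
      rw [sub_smul]; abel
    rw [dist_eq_norm, this, norm_smul, hu]
    simp [abs_of_nonneg (sub_nonneg.2 hle)]
  have h1 : dist (a + s • u) b < (s - s') + s' := by
    calc dist (a + s • u) b ≤ dist (a + s • u) (a + s' • u) + dist (a + s' • u) b :=
          dist_triangle _ _ _
      _ < (s - s') + s' := by rw [hseg]; linarith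
  have h2 : s ≤ dist (a + s • u) b := by
    have := Metric.infDist_le_dist_of_mem (x := a + s • u) hb
    rwa [h] at this
  linarith

/-- Key local equality: for `a ∈ A ∩ Ω`, the normal cones of `A` and of
`C = closure (A ∩ Ω)` at `a` coincide. -/
lemma normal_eq {n : ℕ} {A Ω : Set (EuclideanSpace ℝ (Fin n))} (hA : IsClosed A)
    (hΩ : IsOpen Ω) {a : EuclideanSpace ℝ (Fin n)} (haA : a ∈ A) (haΩ : a ∈ Ω)
    (u : EuclideanSpace ℝ (Fin n)) :
    ((a, u) ∈ normalBundle (closure (A ∩ Ω)) ↔ (a, u) ∈ normalBundle A) := by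
  set C := closure (A ∩ Ω) with hC
  have hCA : C ⊆ A := closure_minimal Set.inter_subset_left hA
  have haC : a ∈ C := subset_closure ⟨haA, haΩ⟩
  obtain ⟨ε, hε, hball⟩ := Metric.isOpen_iff.1 hΩ a haΩ
  constructor
  · rintro ⟨-, hu, s, hs, hds⟩
    refine ⟨haA, hu, ?_⟩
    -- shrink s to s' := min s (ε/3)
    set s' := min s (ε / 3) with hs'def
    have hs' : 0 < s' := lt_min hs (by linarith)
    have hs'le : s' ≤ s := min_le_left _ _
    have hs'ε : s' ≤ ε / 3 := min_le_right _ _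
    have hdC : Metric.infDist (a + s' • u) C = s' := seg_infDist haC hu hs' hs'le hds
    refine ⟨s', hs', ?_⟩
    have hub : Metric.infDist (a + s' • u) A ≤ s' := by
      have := Metric.infDist_le_dist_of_mem (x := a + s' • u) haA
      rwa [dist_add_smul_unit a hu hs'.le] at this
    refine le_antisymm hub ?_
    by_contra hlt
    push_neg at hlt
    obtain ⟨b, hb, hdb⟩ := (Metric.infDist_lt_iff ⟨a, haA⟩).1 hlt
    have hbΩ : b ∈ Ω := by
      apply hball
      have : dist b a ≤ dist b (a + s' • u) + dist (a + s' • u) a := dist_triangle _ _ _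
      have h2 : dist (a + s' • u) a = s' := dist_add_smul_unit a hu hs'.le
      rw [Metric.mem_ball]
      rw [dist_comm] at hdb
      linarith
    have hbC : b ∈ C := subset_closure ⟨hb, hbΩ⟩
    have := Metric.infDist_le_dist_of_mem (x := a + s' • u) hbC
    rw [hdC] at this
    linarith
  · rintro ⟨-, hu, s, hs, hds⟩
    refine ⟨haC, hu, s, hs, ?_⟩
    have h1 : Metric.infDist (a + s • u) A ≤ Metric.infDist (a + s • u) C :=
      Metric.infDist_le_infDist_of_subset hCA ⟨a, haC⟩
    have h2 : Metric.infDist (a + s • u) C ≤ s := by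
      have := Metric.infDist_le_dist_of_mem (x := a + s • u) haC
      rwa [dist_add_smul_unit a hu hs.le] at this
    rw [hds] at h1
    linarith

/-- If `1 ≤ m < n`, `A ⊆ ℝⁿ` is closed, `Ω ⊆ ℝⁿ` is open, `C = Clos(A ∩ Ω)` and `N(A)`
satisfies the `m`-dimensional Lusin (N) condition in `Ω`, then so does `N(C)`. -/
theorem stmt5 {n m : ℕ} (hm : 1 ≤ m) (hmn : m < n)
    (A : Set (EuclideanSpace ℝ (Fin n))) (hA : IsClosed A)
    (Ω : Set (EuclideanSpace ℝ (Fin n))) (hΩ : IsOpen Ω)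
    (hLusin : LusinN A m Ω) :
    LusinN (closure (A ∩ Ω)) m Ω := by
  intro S hS hstrat
  set C := closure (A ∩ Ω) with hC
  have hCA : C ⊆ A := closure_minimal Set.inter_subset_left hA
  have hSAΩ : S ⊆ A ∩ Ω := fun x hx => ⟨hCA (hS hx).1, (hS hx).2⟩
  -- the normal bundles restricted to S coincide
  have hbundle : {p | p ∈ normalBundle C ∧ p.1 ∈ S}
      = {p | p ∈ normalBundle A ∧ p.1 ∈ S} := by
    ext p
    constructor
    · rintro ⟨hp, hpS⟩
      exact ⟨(normal_eq hA hΩ (hSAΩ hpS).1 (hSAΩ hpS).2 p.2).1 hp, hpS⟩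
    · rintro ⟨hp, hpS⟩
      exact ⟨(normal_eq hA hΩ (hSAΩ hpS).1 (hSAΩ hpS).2 p.2).2 hp, hpS⟩
  -- strata intersected with S coincide
  have hstrateq : stratum C m ∩ S = stratum A m ∩ S := by
    ext a
    constructor
    · rintro ⟨⟨haC, h1, h2⟩, haS⟩
      have hne : {u | (a, u) ∈ normalBundle C} = {u | (a, u) ∈ normalBundle A} := by
        ext u; exact normal_eq hA hΩ (hSAΩ haS).1 (hSAΩ haS).2 u
      rw [hne] at h1 h2
      exact ⟨⟨(hSAΩ haS).1, h1, h2⟩, haS⟩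
    · rintro ⟨⟨haA, h1, h2⟩, haS⟩
      have hne : {u | (a, u) ∈ normalBundle C} = {u | (a, u) ∈ normalBundle A} := by
        ext u; exact normal_eq hA hΩ (hSAΩ haS).1 (hSAΩ haS).2 u
      rw [← hne] at h1 h2
      exact ⟨⟨subset_closure ⟨(hSAΩ haS).1, (hSAΩ haS).2⟩, h1, h2⟩, haS⟩
  rw [hbundle]
  apply hLusin S hSAΩ
  rw [← hstrateq]
  exact hstrat
end

section
/- Suppose V and W are finite-dimensional real inner product spaces with dim V = m and dim W = n, f : V → W is a linear map, 0 < t < ∞, and b is a symmetric bilinear form on W such that b(w,w) ≤ t|w|² for every w ∈ W. Then ‖f‖²·trace(b) + (1−n)·t·‖f‖² ≤ trace(b ∘ ⨀₂f) ≤ m·t·‖f‖², where ‖f‖ is the operator norm of f, trace(b) = Σᵢ b(wᵢ,wᵢ) for any orthonormal basis w₁,…,w_n of W, and b ∘ ⨀₂f is the bilinear form on V defined by (v,v') ↦ b(f(v), f(v')), so that trace(b ∘ ⨀₂f) = Σᵢ b(f(vᵢ), f(vᵢ)) for any orthonormal basis v₁,…,v_m of V. -/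
open Module RealInnerProductSpace

/-- If `V, W` are finite-dimensional real inner product spaces with `dim V = m`, `dim W = n`,
`f : V → W` is linear, `0 < t < ∞`, and `b` is a symmetric bilinear form on `W` with
`b(w, w) ≤ t |w|²` for all `w`, then
`‖f‖² trace(b) + (1 - n) t ‖f‖² ≤ trace(b ∘ ⨀₂ f) ≤ m t ‖f‖²`,
where the traces are computed with respect to (arbitrary) orthonormal bases. -/
theorem stmt7 {V W : Type*}
    [NormedAddCommGroup V] [InnerProductSpace ℝ V] [FiniteDimensional ℝ V]
    [NormedAddCommGroup W] [InnerProductSpace ℝ W] [FiniteDimensional ℝ W]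
    (m n : ℕ) (hm : finrank ℝ V = m) (hn : finrank ℝ W = n)
    (f : V →L[ℝ] W) (t : ℝ) (ht : 0 < t)
    (b : W →ₗ[ℝ] W →ₗ[ℝ] ℝ) (hsymm : ∀ w z, b w z = b z w)
    (hb : ∀ w : W, b w w ≤ t * ‖w‖ ^ 2)
    (vB : OrthonormalBasis (Fin m) ℝ V) (wB : OrthonormalBasis (Fin n) ℝ W) :
    ‖f‖ ^ 2 * (∑ j, b (wB j) (wB j)) + (1 - (n : ℝ)) * t * ‖f‖ ^ 2
        ≤ ∑ i, b (f (vB i)) (f (vB i))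
    ∧ ∑ i, b (f (vB i)) (f (vB i)) ≤ (m : ℝ) * t * ‖f‖ ^ 2 := by
  -- the self-adjoint operator associated to b
  set T : W →ₗ[ℝ] W :=
    (((InnerProductSpace.toDual ℝ W).symm.toLinearEquiv.toLinearMap.comp
      (LinearMap.toContinuousLinearMap (E := W)).toLinearMap).comp b) with hT_def
  have hTb : ∀ w z : W, ⟪T w, z⟫ = b w z := by
    intro w z
    simp [hT_def, InnerProductSpace.toDual_symm_apply]
  have hT : T.IsSymmetric := by
    intro w z
    rw [hTb, real_inner_comm, hTb, hsymm]
  set uB := hT.eigenvectorBasis hn with huB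
  set μ := hT.eigenvalues hn with hμ
  have hbuu : ∀ j k, b (uB j) (uB k) = if j = k then μ j else 0 := by
    intro j k
    rw [← hTb, hT.apply_eigenvectorBasis, real_inner_smul_left,
      orthonormal_iff_ite.mp uB.orthonormal]
    split <;> simp [hμ]
  -- key expansion of b via the eigenbasis
  have key : ∀ w z : W, b w z = ∑ j, μ j * (⟪w, uB j⟫ * ⟪z, uB j⟫) := by
    intro w z
    rw [← hTb, ← uB.sum_inner_mul_inner (T w) z]
    congr 1; ext j
    rw [hT _ _, hT.apply_eigenvectorBasis, real_inner_smul_right, real_inner_comm z]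
    simp only [RCLike.ofReal_real_eq_id, id_eq, ← huB, ← hμ]
    ring
  have hμt : ∀ j, μ j ≤ t := by
    intro j
    have := hb (uB j)
    rw [← hTb, hT.apply_eigenvectorBasis, real_inner_smul_left,
      real_inner_self_eq_norm_sq, uB.orthonormal.1 j] at this
    simpa using this
  set g := ContinuousLinearMap.adjoint f with hg
  have hgn : ‖g‖ = ‖f‖ := ContinuousLinearMap.adjoint.norm_map f
  set a : Fin n → ℝ := fun j => ‖g (uB j)‖ ^ 2 with ha
  have ha_nonneg : ∀ j, 0 ≤ a j := fun j => sq_nonneg _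
  have ha_le : ∀ j, a j ≤ ‖f‖ ^ 2 := by
    intro j
    rw [← hgn]
    have := g.le_opNorm (uB j)
    rw [uB.orthonormal.1 j, mul_one] at this
    exact pow_le_pow_left₀ (norm_nonneg _) this 2
  -- the trace over V equals ∑ μ j * a j
  have trace_eq : ∑ i, b (f (vB i)) (f (vB i)) = ∑ j, μ j * a j := by
    simp_rw [key]
    rw [Finset.sum_comm]
    congr 1; ext j
    rw [← Finset.mul_sum]
    congr 1
    have : ∀ i, ⟪f (vB i), uB j⟫ = ⟪vB i, g (uB j)⟫ := fun i =>
      (ContinuousLinearMap.adjoint_inner_right f _ _).symm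
    simp_rw [this, ha]
    rw [← real_inner_self_eq_norm_sq, ← vB.sum_inner_mul_inner (g (uB j)) (g (uB j))]
    congr 1; ext i
    rw [real_inner_comm (vB i)]
  -- trace of b equals ∑ μ
  have traceb_eq : ∑ j, b (wB j) (wB j) = ∑ j, μ j := by
    simp_rw [key]
    rw [Finset.sum_comm]
    congr 1; ext j
    rw [← Finset.mul_sum]
    have : ∑ k, ⟪wB k, uB j⟫ * ⟪wB k, uB j⟫ = 1 := by
      have := wB.sum_inner_mul_inner (uB j) (uB j)
      rw [real_inner_self_eq_norm_sq, uB.orthonormal.1 j] at this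
      simp only [one_pow] at this
      rw [← this]
      congr 1; ext k
      rw [real_inner_comm (uB j)]
    rw [this, mul_one]
  -- ‖f‖² ≤ ∑ a
  have hsum_a : ‖f‖ ^ 2 ≤ ∑ j, a j := by
    have hbound : ∀ v : V, ‖f v‖ ≤ Real.sqrt (∑ j, a j) * ‖v‖ := by
      intro v
      have h1 : ‖f v‖ ^ 2 = ∑ j, ⟪f v, uB j⟫ * ⟪f v, uB j⟫ := by
        have := uB.sum_inner_mul_inner (f v) (f v)
        rw [real_inner_self_eq_norm_sq] at this
        rw [← this]
        congr 1; ext j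
        rw [real_inner_comm (f v)]
      have h2 : ‖f v‖ ^ 2 ≤ (∑ j, a j) * ‖v‖ ^ 2 := by
        rw [h1, Finset.sum_mul]
        apply Finset.sum_le_sum
        intro j _
        have : ⟪f v, uB j⟫ = ⟪v, g (uB j)⟫ :=
          (ContinuousLinearMap.adjoint_inner_right f _ _).symm
        rw [this, ha, ← sq]
        calc ⟪v, g (uB j)⟫ ^ 2 ≤ (‖v‖ * ‖g (uB j)‖) ^ 2 := by
              rw [← sq_abs]
              exact pow_le_pow_left₀ (abs_nonneg _) (abs_real_inner_le_norm _ _) 2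
          _ = ‖g (uB j)‖ ^ 2 * ‖v‖ ^ 2 := by ring
      calc ‖f v‖ = Real.sqrt (‖f v‖ ^ 2) := (Real.sqrt_sq (norm_nonneg _)).symm
        _ ≤ Real.sqrt ((∑ j, a j) * ‖v‖ ^ 2) := Real.sqrt_le_sqrt h2
        _ = Real.sqrt (∑ j, a j) * ‖v‖ := by
            rw [Real.sqrt_mul (Finset.sum_nonneg fun j _ => ha_nonneg j), Real.sqrt_sq (norm_nonneg _)]
    have hfle : ‖f‖ ≤ Real.sqrt (∑ j, a j) :=
      f.opNorm_le_bound (Real.sqrt_nonneg _) hbound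
    calc ‖f‖ ^ 2 ≤ Real.sqrt (∑ j, a j) ^ 2 := pow_le_pow_left₀ (norm_nonneg _) hfle 2
      _ = ∑ j, a j := Real.sq_sqrt (Finset.sum_nonneg fun j _ => ha_nonneg j)
  constructor
  · rw [trace_eq, traceb_eq]
    have perterm : ∀ j, ‖f‖ ^ 2 * μ j - t * ‖f‖ ^ 2 + t * a j ≤ μ j * a j := by
      intro j
      have hx : a j - ‖f‖ ^ 2 ≤ 0 := sub_nonpos.mpr (ha_le j)
      have := mul_le_mul_of_nonpos_right (hμt j) hx
      nlinarith [this]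
    have hle := Finset.sum_le_sum (fun j (_ : j ∈ Finset.univ) => perterm j)
    have hsum : ∑ i : Fin n, (‖f‖ ^ 2 * μ i - t * ‖f‖ ^ 2 + t * a i)
        = ‖f‖ ^ 2 * (∑ j, μ j) - n * (t * ‖f‖ ^ 2) + t * ∑ j, a j := by
      rw [Finset.sum_add_distrib, Finset.sum_sub_distrib, ← Finset.mul_sum, ← Finset.mul_sum,
        Finset.sum_const, Finset.card_univ, Fintype.card_fin, nsmul_eq_mul]
      rw [← Finset.mul_sum]; ring
    rw [hsum] at hle
    nlinarith [hle, mul_nonneg ht.le (sub_nonneg.mpr hsum_a)]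
  · calc ∑ i, b (f (vB i)) (f (vB i)) ≤ ∑ _i : Fin m, t * ‖f‖ ^ 2 := by
          apply Finset.sum_le_sum
          intro i _
          refine (hb _).trans ?_
          apply mul_le_mul_of_nonneg_left _ ht.le
          have := f.le_opNorm (vB i)
          rw [vB.orthonormal.1 i, mul_one] at this
          exact pow_le_pow_left₀ (norm_nonneg _) this 2
      _ = m * t * ‖f‖ ^ 2 := by rw [Finset.sum_const]; simp; ring
end

section
/- Let A = {(x,y,z) ∈ ℝ³ : z = |x|} and let F : ℝ³ → ℝ³ be the diffeomorphism F(x,y,z) = (x, y, z + 1 − x² − y²), so that F(A) = {(x,y,z) ∈ ℝ³ : z = |x| + 1 − x² − y²}. Then the set {u ∈ S² : ((0, y, 1 − y²), u) ∈ N(F(A)) for some y ∈ ℝ} of unit normals of F(A) attached to the curve F({x = z = 0}) = {(0, y, 1 − y²) : y ∈ ℝ} has nonempty interior relative to S²; in particular it has positive H² measure. -/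
open MeasureTheory Metric

namespace Stmt10Aux

noncomputable section

abbrev A3 : Set (EuclideanSpace ℝ (Fin 3)) :=
  {p : EuclideanSpace ℝ (Fin 3) | p 2 = |p 0| + 1 - p 0 ^ 2 - p 1 ^ 2}

lemma coord_dist {n : ℕ} (x y : EuclideanSpace ℝ (Fin n)) (i : Fin n) :
    |x i - y i| ≤ dist x y := by
  rw [EuclideanSpace.dist_eq]
  have h1 : dist (x i) (y i) ^ 2 ≤ ∑ j, dist (x j) (y j) ^ 2 :=
    Finset.single_le_sum (f := fun j => dist (x j) (y j) ^ 2)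
      (fun j _ => by positivity) (Finset.mem_univ i)
  calc |x i - y i| = √(dist (x i) (y i) ^ 2) := by
        rw [Real.sqrt_sq_eq_abs, Real.dist_eq, abs_abs]
    _ ≤ _ := Real.sqrt_le_sqrt h1

lemma norm_sq_three (u : EuclideanSpace ℝ (Fin 3)) (h : ‖u‖ = 1) :
    u 0 ^ 2 + u 1 ^ 2 + u 2 ^ 2 = 1 := by
  have := EuclideanSpace.norm_eq u
  rw [h, Fin.sum_univ_three] at this
  have h2 := congrArg (· ^ 2) this.symm
  simp only [Real.norm_eq_abs, sq_abs] at h2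
  rw [Real.sq_sqrt (by positivity)] at h2
  linarith [h2]

lemma hA3 : A3.Nonempty :=
  ⟨(EuclideanSpace.equiv (Fin 3) ℝ).symm ![0, 0, 1], by
    show ((1 : ℝ)) = |(0:ℝ)| + 1 - 0 ^ 2 - 0 ^ 2; norm_num⟩

/-- The key geometric lemma: every unit vector in the downward cone
`u 2 < 0`, `|u 0| ≤ -u 2` is a normal of the surface attached to the crease curve. -/
lemma key (u : EuclideanSpace ℝ (Fin 3)) (h1 : ‖u‖ = 1) (h3 : u 2 < 0)
    (h13 : |u 0| ≤ -u 2) :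
    ∃ y : ℝ, (((EuclideanSpace.equiv (Fin 3) ℝ).symm ![0, y, 1 - y ^ 2], u)
      ∈ normalBundle A3) := by
  set y : ℝ := u 1 / (2 * u 2) with hy
  refine ⟨y, ?_, h1, 1/2, by norm_num, ?_⟩
  · show (1 - y ^ 2 : ℝ) = |(0:ℝ)| + 1 - 0 ^ 2 - y ^ 2
    norm_num
  · set p : EuclideanSpace ℝ (Fin 3) := (EuclideanSpace.equiv (Fin 3) ℝ).symm ![0, y, 1 - y ^ 2]
    have hp : p ∈ A3 := by
      show (1 - y ^ 2 : ℝ) = |(0:ℝ)| + 1 - 0 ^ 2 - y ^ 2; norm_num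
    have hsum := norm_sq_three u h1
    have hu1 : u 1 = 2 * y * u 2 := by
      rw [hy]; field_simp [h3.ne]
    have hu2ge : -1 ≤ u 2 := by nlinarith [sq_nonneg (u 0), sq_nonneg (u 1), sq_nonneg (u 2 - 1)]
    refine le_antisymm ?_ ?_
    · calc infDist (p + (1/2 : ℝ) • u) A3 ≤ dist (p + (1/2 : ℝ) • u) p :=
          infDist_le_dist_of_mem hp
        _ = ‖(1/2 : ℝ) • u‖ := by rw [dist_eq_norm, add_sub_cancel_left]
        _ = 1/2 := by rw [norm_smul, h1]; norm_num
    · by_contra hlt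
      push_neg at hlt
      obtain ⟨q, hq, hqd⟩ := (infDist_lt_iff hA3).mp hlt
      refine absurd hqd (not_lt.mpr ?_)
      have hq2 : q 2 = |q 0| + 1 - q 0 ^ 2 - q 1 ^ 2 := hq
      set x : ℝ := q 0
      set t : ℝ := q 1
      set a : ℝ := |x| with ha
      have ha2 : a ^ 2 = x ^ 2 := sq_abs x
      have ha0 : 0 ≤ a := abs_nonneg x
      have habs : u 0 * x ≤ -u 2 * a := by
        calc u 0 * x ≤ |u 0 * x| := le_abs_self _
          _ = |u 0| * a := by rw [abs_mul]
          _ ≤ -u 2 * a := mul_le_mul_of_nonneg_right h13 ha0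
      rw [EuclideanSpace.dist_eq, Fin.sum_univ_three]
      have hD : (1/2 : ℝ) ^ 2 ≤
          dist ((p + (1/2 : ℝ) • u) 0) (q 0) ^ 2 + dist ((p + (1/2 : ℝ) • u) 1) (q 1) ^ 2
            + dist ((p + (1/2 : ℝ) • u) 2) (q 2) ^ 2 := by
        have e0 : (p + (1/2 : ℝ) • u) 0 = 0 + (1/2) * u 0 := rfl
        have e1 : (p + (1/2 : ℝ) • u) 1 = y + (1/2) * u 1 := rfl
        have e2 : (p + (1/2 : ℝ) • u) 2 = (1 - y ^ 2) + (1/2) * u 2 := rfl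
        rw [Real.dist_eq, Real.dist_eq, Real.dist_eq, sq_abs, sq_abs, sq_abs, e0, e1, e2, hq2,
          show q 0 = x from rfl, show q 1 = t from rfl]
        have hidentity :
            (0 + 1/2 * u 0 - x) ^ 2 + (y + 1/2 * u 1 - t) ^ 2
              + ((1 - y ^ 2) + 1/2 * u 2 - (a + 1 - x ^ 2 - t ^ 2)) ^ 2 - (1/2)^2
            = (-a + x ^ 2 + (t - y) ^ 2 + 2 * y * (t - y)) ^ 2
              + (-(u 0 * x) - u 2 * a) + (x ^ 2 + (t - y) ^ 2) * (1 + u 2) := by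
          have hsum' : u 0 ^ 2 + (2 * y * u 2) ^ 2 + u 2 ^ 2 = 1 := by
            rw [← hu1]; exact hsum
          rw [hu1]
          linear_combination (1/4 : ℝ) * hsum'
        linarith [sq_nonneg (-a + x ^ 2 + (t - y) ^ 2 + 2 * y * (t - y)),
          mul_nonneg (by positivity : (0:ℝ) ≤ x ^ 2 + (t - y) ^ 2) (by linarith : (0:ℝ) ≤ 1 + u 2),
          habs, hidentity]
      calc (1/2 : ℝ) = √((1/2)^2) := by rw [Real.sqrt_sq]; norm_num
        _ ≤ _ := Real.sqrt_le_sqrt hD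

end

end Stmt10Aux

/-- For `A = {(x,y,z) : z = |x|}` and the diffeomorphism `F(x,y,z) = (x, y, z + 1 - x² - y²)`,
so that `F(A) = {(x,y,z) : z = |x| + 1 - x² - y²}`, the set of unit normals of `F(A)` attached
to the curve `{(0, y, 1 - y²) : y ∈ ℝ}` has nonempty interior relative to `S²`; in particular it
has positive `H²` measure. -/
theorem stmt10 :
    (∃ u ∈ {u : EuclideanSpace ℝ (Fin 3) | ∃ y : ℝ,
        (((EuclideanSpace.equiv (Fin 3) ℝ).symm ![0, y, 1 - y ^ 2], u) ∈ normalBundle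
          {p : EuclideanSpace ℝ (Fin 3) | p 2 = |p 0| + 1 - p 0 ^ 2 - p 1 ^ 2})},
      ∃ ε > (0 : ℝ), ∀ w : EuclideanSpace ℝ (Fin 3), ‖w‖ = 1 → dist w u < ε →
        w ∈ {u : EuclideanSpace ℝ (Fin 3) | ∃ y : ℝ,
          (((EuclideanSpace.equiv (Fin 3) ℝ).symm ![0, y, 1 - y ^ 2], u) ∈ normalBundle
            {p : EuclideanSpace ℝ (Fin 3) | p 2 = |p 0| + 1 - p 0 ^ 2 - p 1 ^ 2})})
    ∧ 0 < μH[(2 : ℝ)] {u : EuclideanSpace ℝ (Fin 3) | ∃ y : ℝ,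
        (((EuclideanSpace.equiv (Fin 3) ℝ).symm ![0, y, 1 - y ^ 2], u) ∈ normalBundle
          {p : EuclideanSpace ℝ (Fin 3) | p 2 = |p 0| + 1 - p 0 ^ 2 - p 1 ^ 2})} := by
  open Stmt10Aux in
  set S : Set (EuclideanSpace ℝ (Fin 3)) := {u : EuclideanSpace ℝ (Fin 3) | ∃ y : ℝ,
    (((EuclideanSpace.equiv (Fin 3) ℝ).symm ![0, y, 1 - y ^ 2], u) ∈ normalBundle
      {p : EuclideanSpace ℝ (Fin 3) | p 2 = |p 0| + 1 - p 0 ^ 2 - p 1 ^ 2})} with hS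
  have hCsub : ∀ u : EuclideanSpace ℝ (Fin 3),
      ‖u‖ = 1 → u 2 < 0 → |u 0| ≤ -u 2 → u ∈ S := fun u h1 h3 h13 =>
    Stmt10Aux.key u h1 h3 h13
  constructor
  · -- interior point: u₀ = (0,0,-1)
    set u₀ : EuclideanSpace ℝ (Fin 3) := (EuclideanSpace.equiv (Fin 3) ℝ).symm ![0, 0, -1]
      with hu₀
    have hn : ‖u₀‖ = 1 := by
      rw [EuclideanSpace.norm_eq, Fin.sum_univ_three]
      have e0 : u₀ 0 = 0 := rfl
      have e1 : u₀ 1 = 0 := rfl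
      have e2 : u₀ 2 = -1 := rfl
      rw [e0, e1, e2]
      simp [Real.sqrt_eq_one]
    refine ⟨u₀, hCsub u₀ hn (by norm_num [show u₀ 2 = -1 from rfl])
      (by norm_num [show u₀ 0 = (0:ℝ) from rfl, show u₀ 2 = (-1:ℝ) from rfl]), 1/2,
      by norm_num, ?_⟩
    intro w hw hdist
    have h0 : |w 0 - u₀ 0| ≤ dist w u₀ := Stmt10Aux.coord_dist w u₀ 0
    have h2 : |w 2 - u₀ 2| ≤ dist w u₀ := Stmt10Aux.coord_dist w u₀ 2
    rw [show u₀ 0 = (0:ℝ) from rfl] at h0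
    rw [show u₀ 2 = (-1:ℝ) from rfl] at h2
    have hw2 : w 2 < -1/2 := by
      have := abs_le.mp h2
      cases abs_cases (w 2 - -1) with
      | inl h => linarith [h.1, hdist, h2]
      | inr h => linarith [h.1, hdist, h2]
    have hw0 : |w 0| < 1/2 := by
      simpa using lt_of_le_of_lt h0 hdist
    exact hCsub w hw (by linarith) (by linarith)
  · -- positive measure via projection to first two coordinates
    set f : EuclideanSpace ℝ (Fin 3) → (Fin 2 → ℝ) := fun u => ![u 0, u 1] with hf
    have hlip : LipschitzWith 1 f := by
      apply LipschitzWith.of_dist_le_mul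
      intro u v
      rw [NNReal.coe_one, one_mul, dist_pi_le_iff dist_nonneg]
      intro i
      fin_cases i
      · simpa [Real.dist_eq, hf] using Stmt10Aux.coord_dist u v 0
      · simpa [Real.dist_eq, hf] using Stmt10Aux.coord_dist u v 1
    have himg : Metric.ball (0 : Fin 2 → ℝ) (1/2) ⊆ f '' S := by
      intro v hv
      have hv0 : |v 0| < 1/2 := by
        have := (dist_le_pi_dist v 0 0).trans_lt (mem_ball.mp hv)
        simpa [Real.dist_eq] using this
      have hv1 : |v 1| < 1/2 := by
        have := (dist_le_pi_dist v 0 1).trans_lt (mem_ball.mp hv)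
        simpa [Real.dist_eq] using this
      have hv0' : v 0 ^ 2 < 1/4 := by
        have h := mul_self_lt_mul_self (abs_nonneg (v 0)) hv0
        rw [abs_mul_abs_self] at h; nlinarith [h]
      have hv1' : v 1 ^ 2 < 1/4 := by
        have h := mul_self_lt_mul_self (abs_nonneg (v 1)) hv1
        rw [abs_mul_abs_self] at h; nlinarith [h]
      set c : ℝ := 1 - v 0 ^ 2 - v 1 ^ 2 with hc
      have hcpos : 0 < c := by simp only [hc]; nlinarith
      set u : EuclideanSpace ℝ (Fin 3) :=
        (EuclideanSpace.equiv (Fin 3) ℝ).symm ![v 0, v 1, -√c] with hu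
      have e0 : u 0 = v 0 := rfl
      have e1 : u 1 = v 1 := rfl
      have e2 : u 2 = -√c := rfl
      have hnorm : ‖u‖ = 1 := by
        rw [EuclideanSpace.norm_eq, Fin.sum_univ_three, e0, e1, e2]
        simp only [Real.norm_eq_abs, sq_abs]
        rw [show (-√c) ^ 2 = √c ^ 2 by ring, Real.sq_sqrt hcpos.le]
        rw [show v 0 ^ 2 + v 1 ^ 2 + c = 1 by rw [hc]; ring]
        exact Real.sqrt_one
      have hneg : u 2 < 0 := by
        rw [e2, neg_lt, neg_zero]
        exact Real.sqrt_pos.mpr hcpos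
      have hcone : |u 0| ≤ -u 2 := by
        rw [e0, e2, neg_neg]
        rw [show |v 0| = √(v 0 ^ 2) by rw [Real.sqrt_sq_eq_abs]]
        apply Real.sqrt_le_sqrt
        rw [hc]; nlinarith
      refine ⟨u, hCsub u hnorm hneg hcone, ?_⟩
      funext i
      fin_cases i
      · exact e0
      · exact e1
    have hμpi : (μH[(2 : ℝ)] : Measure (Fin 2 → ℝ)) = volume := by
      have h := MeasureTheory.hausdorffMeasure_pi_real (ι := Fin 2)
      rwa [Fintype.card_fin, Nat.cast_ofNat] at h
    have hball : (0 : ENNReal) < volume (Metric.ball (0 : Fin 2 → ℝ) (1/2)) :=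
      Metric.isOpen_ball.measure_pos volume (Metric.nonempty_ball.mpr (by norm_num))
    have hchain : volume (Metric.ball (0 : Fin 2 → ℝ) (1/2)) ≤ μH[(2 : ℝ)] S := by
      calc volume (Metric.ball (0 : Fin 2 → ℝ) (1/2)) ≤ volume (f '' S) :=
            measure_mono himg
        _ = μH[(2 : ℝ)] (f '' S) := by rw [hμpi]
        _ ≤ (1 : NNReal) ^ (2:ℝ) * μH[(2 : ℝ)] S :=
            hlip.hausdorffMeasure_image_le (by norm_num) S
        _ = μH[(2 : ℝ)] S := by simp
    exact lt_of_lt_of_le hball hchain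
end

section
/- Let n ≥ 2, let v ∈ ℝⁿ be a unit vector, let T = {x ∈ ℝⁿ : x·v = 0} with orthogonal projection T_♮ onto T, let r > 0, and let F : ℝⁿ → ℝⁿ be the diffeomorphism F(x) = x + (r/8)v − (4r)⁻¹|T_♮(x)|² v. Suppose A ⊆ ℝⁿ is closed, x ∈ A, η ∈ ℝⁿ with |η| = 1, and (F(y) − F(x))·η ≤ 0 for every y ∈ A. Let ζ = DF(x)*(η)/|DF(x)*(η)|, where DF(x) is the differential of F at x and * denotes the adjoint. Then δ_A(x + (r/2)ζ) = r/2. -/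
open MeasureTheory Metric

set_option maxHeartbeats 1000000 in
/-- Let `v` be a unit vector in `ℝⁿ`, `T = {x : x · v = 0}` with orthogonal projection
`T_♮ x = x - (x · v) v`, `r > 0`, and `F(x) = x + (r/8) v - (4r)⁻¹ |T_♮ x|² v`.
If `A ⊆ ℝⁿ` is closed, `x ∈ A`, `|η| = 1` and `(F(y) - F(x)) · η ≤ 0` for every `y ∈ A`,
then, with `ζ = DF(x)*(η) / |DF(x)*(η)|`, one has `δ_A(x + (r/2) ζ) = r/2`. -/
theorem stmt12 {n : ℕ} (hn : 2 ≤ n)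
    (v : EuclideanSpace ℝ (Fin n)) (hv : ‖v‖ = 1) (r : ℝ) (hr : 0 < r)
    (F : EuclideanSpace ℝ (Fin n) → EuclideanSpace ℝ (Fin n))
    (hF : ∀ x, F x = x + (r / 8) • v
      - ((4 * r)⁻¹ * ‖x - (inner ℝ x v : ℝ) • v‖ ^ 2) • v)
    (A : Set (EuclideanSpace ℝ (Fin n))) (hA : IsClosed A)
    (x : EuclideanSpace ℝ (Fin n)) (hx : x ∈ A)
    (η : EuclideanSpace ℝ (Fin n)) (hη : ‖η‖ = 1)
    (hsupp : ∀ y ∈ A, (inner ℝ (F y - F x) η : ℝ) ≤ 0) :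
    Metric.infDist
      (x + (r / 2) • (‖ContinuousLinearMap.adjoint (fderiv ℝ F x) η‖⁻¹ •
        ContinuousLinearMap.adjoint (fderiv ℝ F x) η)) A = r / 2 := by
  classical
  set B : EuclideanSpace ℝ (Fin n) →L[ℝ] EuclideanSpace ℝ (Fin n) :=
    ContinuousLinearMap.id ℝ _ - (innerSL ℝ v).smulRight v with hBdef
  have hB : ∀ y : EuclideanSpace ℝ (Fin n), B y = y - (inner ℝ y v : ℝ) • v := by
    intro y
    rw [hBdef, ContinuousLinearMap.sub_apply, ContinuousLinearMap.id_apply,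
      ContinuousLinearMap.smulRight_apply, innerSL_apply_apply, real_inner_comm v y]
  set t : EuclideanSpace ℝ (Fin n) := B x with htdef
  have hBv : ∀ u : EuclideanSpace ℝ (Fin n), (inner ℝ (B u) v : ℝ) = 0 := by
    intro u
    rw [hB, inner_sub_left, real_inner_smul_left, real_inner_self_eq_norm_sq, hv]
    ring
  have htv : (inner ℝ t v : ℝ) = 0 := by rw [htdef]; exact hBv x
  have htB : ∀ z : EuclideanSpace ℝ (Fin n), (inner ℝ t (B z) : ℝ) = inner ℝ t z := by
    intro z
    rw [hB, inner_sub_right, real_inner_smul_right, htv]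
    ring
  -- the derivative of F at x
  have hFeq : F = fun y => y + (r / 8) • v - ((4 * r)⁻¹ * ‖B y‖ ^ 2) • v := by
    funext y; rw [hF y, hB y]
  set D : EuclideanSpace ℝ (Fin n) →L[ℝ] EuclideanSpace ℝ (Fin n) :=
    ContinuousLinearMap.id ℝ _ -
      (((4 * r)⁻¹ • (2 • (innerSL ℝ t).comp B)).smulRight v) with hDdef
  have hd : HasFDerivAt F D x := by
    rw [hFeq, hDdef, htdef]
    have h1 : HasFDerivAt (fun y : EuclideanSpace ℝ (Fin n) => ‖B y‖ ^ 2)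
        (2 • (innerSL ℝ (B x)).comp B) x := (B.hasFDerivAt).norm_sq
    have h2 : HasFDerivAt (fun y : EuclideanSpace ℝ (Fin n) => (4 * r)⁻¹ * ‖B y‖ ^ 2)
        ((4 * r)⁻¹ • (2 • (innerSL ℝ (B x)).comp B)) x := h1.const_mul _
    have h3 := h2.smul_const v
    have h4 : HasFDerivAt (fun y : EuclideanSpace ℝ (Fin n) => y + (r / 8) • v)
        (ContinuousLinearMap.id ℝ _) x := (hasFDerivAt_id x).add_const _
    exact h4.sub h3
  have hfd : fderiv ℝ F x = D := hd.fderiv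
  have hDz : ∀ z : EuclideanSpace ℝ (Fin n),
      D z = z - ((2 * r)⁻¹ * (inner ℝ t z : ℝ)) • v := by
    intro z
    have h1 : D z = z - ((4 * r)⁻¹ * ((2 : ℝ) * (inner ℝ t (B z) : ℝ))) • v := by
      rw [hDdef]
      simp only [ContinuousLinearMap.sub_apply, ContinuousLinearMap.id_apply,
        ContinuousLinearMap.smulRight_apply, ContinuousLinearMap.smul_apply,
        ContinuousLinearMap.comp_apply, ContinuousLinearMap.add_apply,
        innerSL_apply_apply, smul_eq_mul, two_smul, two_mul]
    have h2 : ((4 * r) : ℝ)⁻¹ * ((2 : ℝ) * (inner ℝ t z : ℝ))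
        = (2 * r)⁻¹ * (inner ℝ t z : ℝ) := by
      field_simp
      ring
    rw [h1, htB z, h2]
  -- the adjoint applied to η
  set a : ℝ := inner ℝ η v with hadef
  set w : EuclideanSpace ℝ (Fin n) :=
    ContinuousLinearMap.adjoint (fderiv ℝ F x) η with hwdef
  have hw : w = η - ((2 * r)⁻¹ * a) • t := by
    rw [hwdef, hfd]
    apply ext_inner_right ℝ
    intro z
    rw [ContinuousLinearMap.adjoint_inner_left, hDz z]
    rw [inner_sub_left, real_inner_smul_left, inner_sub_right, real_inner_smul_right,
      hadef]
    ring
  have hwv : (inner ℝ w v : ℝ) = a := by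
    rw [hw, inner_sub_left, real_inner_smul_left, htv]
    ring
  have haw : a ≤ ‖w‖ := by
    calc a = inner ℝ w v := hwv.symm
      _ ≤ ‖w‖ * ‖v‖ := real_inner_le_norm w v
      _ = ‖w‖ := by rw [hv, mul_one]
  have hw0 : w ≠ 0 := by
    intro h0
    have ha0 : a = 0 := by rw [← hwv, h0, inner_zero_left]
    have hη0 : η = 0 := by
      have := hw
      rw [h0, ha0] at this
      simpa using this.symm
    rw [hη0, norm_zero] at hη
    exact one_ne_zero hη.symm
  have hwpos : 0 < ‖w‖ := norm_pos_iff.2 hw0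
  clear_value B t D a w
  -- pythagoras for the projection B
  have hBu : ∀ u : EuclideanSpace ℝ (Fin n),
      ‖u‖ ^ 2 = ‖B u‖ ^ 2 + (inner ℝ u v : ℝ) ^ 2 := by
    intro u
    have h1 : u = B u + (inner ℝ u v : ℝ) • v := by rw [hB]; abel
    calc ‖u‖ ^ 2 = ‖B u + (inner ℝ u v : ℝ) • v‖ ^ 2 := by rw [← h1]
      _ = ‖B u‖ ^ 2 + 2 * (inner ℝ (B u) ((inner ℝ u v : ℝ) • v) : ℝ)
          + ‖(inner ℝ u v : ℝ) • v‖ ^ 2 := norm_add_sq_real _ _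
      _ = ‖B u‖ ^ 2 + (inner ℝ u v : ℝ) ^ 2 := by
          rw [real_inner_smul_right, hBv u, norm_smul, hv]
          simp [sq_abs]
  -- key algebraic identity
  have key : ∀ y : EuclideanSpace ℝ (Fin n),
      (inner ℝ (F y - F x) η : ℝ)
        = (inner ℝ (y - x) w : ℝ) - a * (4 * r)⁻¹ * ‖B (y - x)‖ ^ 2 := by
    intro y
    have hFy : F y = y + (r / 8) • v - ((4 * r)⁻¹ * ‖B y‖ ^ 2) • v := by
      rw [hFeq]
    have hFx : F x = x + (r / 8) • v - ((4 * r)⁻¹ * ‖t‖ ^ 2) • v := by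
      rw [hFeq, htdef]
    have hsplit : B y = t + B (y - x) := by
      rw [htdef, ← map_add]
      congr 1
      abel
    have hny : ‖B y‖ ^ 2 = ‖t‖ ^ 2 + 2 * (inner ℝ t (B (y - x)) : ℝ)
        + ‖B (y - x)‖ ^ 2 := by
      rw [hsplit]; exact norm_add_sq_real _ _
    have hit : (inner ℝ (y - x) t : ℝ) = inner ℝ t (B (y - x)) := by
      have hdecomp : y - x = B (y - x) + (inner ℝ (y - x) v : ℝ) • v := by
        rw [hB]; abel
      calc (inner ℝ (y - x) t : ℝ)
          = inner ℝ (B (y - x) + (inner ℝ (y - x) v : ℝ) • v) t := by rw [← hdecomp]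
        _ = (inner ℝ (B (y - x)) t : ℝ) + (inner ℝ (y - x) v : ℝ) * inner ℝ v t := by
            rw [inner_add_left, real_inner_smul_left]
        _ = inner ℝ t (B (y - x)) := by
            have h5 : (inner ℝ v t : ℝ) = 0 := by rw [real_inner_comm]; exact htv
            rw [h5, real_inner_comm (B (y - x)) t]
            ring
    have hvec : F y - F x = (y - x)
        - (((4 * r)⁻¹ * ‖B y‖ ^ 2) - ((4 * r)⁻¹ * ‖t‖ ^ 2)) • v := by
      rw [hFy, hFx, sub_smul]
      abel
    rw [hvec, inner_sub_left, real_inner_smul_left, hw, inner_sub_right,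
      real_inner_smul_right, hny, hit]
    have hcomm : (inner ℝ v η : ℝ) = a := by rw [hadef]; exact real_inner_comm η v
    rw [hcomm]
    field_simp [hr.ne']
    ring
  -- the chosen point
  have hζnorm : ‖(‖w‖⁻¹ • w : EuclideanSpace ℝ (Fin n))‖ = 1 := by
    rw [norm_smul, norm_inv, norm_norm, inv_mul_cancel₀ hwpos.ne']
  set p : EuclideanSpace ℝ (Fin n) := x + (r / 2) • (‖w‖⁻¹ • w) with hpdef
  clear_value p
  have hpx : dist p x = r / 2 := by
    rw [hpdef, dist_eq_norm, add_sub_cancel_left, norm_smul, hζnorm]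
    rw [Real.norm_eq_abs, abs_of_pos (by linarith)]
    ring
  apply le_antisymm
  · exact (infDist_le_dist_of_mem hx).trans hpx.le
  · by_contra hcon
    push_neg at hcon
    obtain ⟨y, hy, hdy⟩ := (infDist_lt_iff ⟨x, hx⟩).1 hcon
    -- hdy : dist p y < r / 2
    have hn1 : ‖(r / 2) • (‖w‖⁻¹ • w) - (y - x)‖ < r / 2 := by
      have : p - y = (r / 2) • (‖w‖⁻¹ • w) - (y - x) := by rw [hpdef]; abel
      rw [← this, ← dist_eq_norm]
      exact hdy
    have hune : y - x ≠ 0 := by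
      intro h0
      rw [h0, sub_zero, norm_smul, hζnorm, Real.norm_eq_abs,
        abs_of_pos (by linarith : (0:ℝ) < r / 2)] at hn1
      rw [mul_one] at hn1
      exact lt_irrefl _ hn1
    have hupos : 0 < ‖y - x‖ := norm_pos_iff.2 hune
    -- expand the square
    have hsq : ‖(r / 2) • (‖w‖⁻¹ • w) - (y - x)‖ ^ 2 < (r / 2) ^ 2 :=
      pow_lt_pow_left₀ hn1 (norm_nonneg _) (by norm_num)
    have hexp : ‖(r / 2) • (‖w‖⁻¹ • w) - (y - x)‖ ^ 2
        = (r / 2) ^ 2 - 2 * ((r / 2) * (‖w‖⁻¹ * (inner ℝ w (y - x) : ℝ)))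
          + ‖y - x‖ ^ 2 := by
      have hz : ((r / 2) • (‖w‖⁻¹ • w) : EuclideanSpace ℝ (Fin n))
          = (r / 2 * ‖w‖⁻¹) • w := smul_smul _ _ _
      rw [hz, norm_sub_sq_real, real_inner_smul_left, norm_smul, Real.norm_eq_abs,
        abs_of_pos (mul_pos (by linarith : (0:ℝ) < r / 2) (inv_pos.2 hwpos))]
      have h1 : r / 2 * ‖w‖⁻¹ * ‖w‖ = r / 2 := by
        rw [mul_assoc, inv_mul_cancel₀ hwpos.ne', mul_one]
      rw [h1]
      ring
    have hkey1 : ‖y - x‖ ^ 2 < r * (‖w‖⁻¹ * (inner ℝ (y - x) w : ℝ)) := by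
      rw [real_inner_comm w (y - x)]
      have hb : 2 * ((r / 2) * (‖w‖⁻¹ * (inner ℝ w (y - x) : ℝ)))
          = r * (‖w‖⁻¹ * (inner ℝ w (y - x) : ℝ)) := by ring
      linarith [hsq, hexp, hb]
    have hiw : ‖y - x‖ ^ 2 * ‖w‖ < r * (inner ℝ (y - x) w : ℝ) := by
      have h2 := mul_lt_mul_of_pos_right hkey1 hwpos
      have h3 : r * (‖w‖⁻¹ * (inner ℝ (y - x) w : ℝ)) * ‖w‖
          = r * (inner ℝ (y - x) w : ℝ) := by
        have h4 : r * (‖w‖⁻¹ * (inner ℝ (y - x) w : ℝ)) * ‖w‖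
            = r * (inner ℝ (y - x) w : ℝ) * (‖w‖⁻¹ * ‖w‖) := by ring
        rw [h4, inv_mul_cancel₀ hwpos.ne', mul_one]
      linarith
    have hBle : ‖B (y - x)‖ ^ 2 ≤ ‖y - x‖ ^ 2 := by
      linarith [hBu (y - x), sq_nonneg (inner ℝ (y - x) v : ℝ)]
    have hyA := hsupp y hy
    rw [key y] at hyA
    -- clear the inverse
    have h4r : (0:ℝ) < 4 * r := by linarith
    have h7 : (inner ℝ (y - x) w : ℝ) * (4 * r) ≤ a * ‖B (y - x)‖ ^ 2 := by
      have heq : a * (4 * r)⁻¹ * ‖B (y - x)‖ ^ 2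
          = a * ‖B (y - x)‖ ^ 2 / (4 * r) := by ring
      rw [← le_div_iff₀ h4r]
      rw [heq] at hyA
      linarith
    nlinarith [mul_nonneg (sub_nonneg.2 haw) (sq_nonneg ‖B (y - x)‖),
      mul_nonneg (sub_nonneg.2 hBle) hwpos.le,
      mul_pos (pow_pos hupos 2) hwpos, hiw, h7, hr]
end

section
/- Let n ≥ 2, let v ∈ ℝⁿ be a unit vector, let T = {x ∈ ℝⁿ : x·v = 0} with orthogonal projection T_♮ onto T, let r > 0, and let F : ℝⁿ → ℝⁿ be the diffeomorphism F(x) = x + (r/8)v − (4r)⁻¹|T_♮(x)|² v. Suppose A ⊆ ℝⁿ is closed, 0 ∈ A, A ⊆ {x : |T_♮(x)| ≤ 4r and |x·v| ≤ 4r}, and x·v ≤ r/16 for every x ∈ A. Then H^{n−1}({η ∈ S^{n−1} : there exists z ∈ F(A) with |T_♮(z)| ≤ r and |z·v| ≤ r such that (w − z)·η ≤ 0 for every w ∈ F(A)}) ≥ α_{n−1}·(1 + 32²)^{−(n−1)/2}, where α_{n−1} is the Lebesgue measure of the unit ball in ℝ^{n−1}. -/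
open MeasureTheory Metric

lemma aux_vol_le_hausdorff {m : ℕ} (s : Set (EuclideanSpace ℝ (Fin m)))
    (hs : MeasurableSet s) : volume s ≤ μH[(m : ℝ)] s := by
  set f := (MeasurableEquiv.toLp 2 (Fin m → ℝ)).symm
  have h1 : volume s = volume (f '' s) := by
    rw [← (EuclideanSpace.volume_preserving_symm_measurableEquiv_toLp (Fin m)).measure_preimage
      (f.measurableSet_image.2 hs).nullMeasurableSet]
    congr 1
    exact (Set.preimage_image_eq s f.injective).symm
  have h2 : (volume (f '' s)) = μH[(m : ℝ)] (f '' s) := by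
    have := hausdorffMeasure_pi_real (ι := Fin m)
    simp only [Fintype.card_fin] at this
    rw [← this]
  have h3 : μH[(m : ℝ)] (f '' s) ≤ μH[(m : ℝ)] s := by
    have hl : LipschitzWith 1 f := by
      exact PiLp.lipschitzWith_ofLp 2 _
    simpa using hl.hausdorffMeasure_image_le (by positivity) s
  rw [h1, h2]; exact h3


lemma aux_proj_norm_le {n : ℕ} (v : EuclideanSpace ℝ (Fin n)) (hv : ‖v‖ = 1)
    (u : EuclideanSpace ℝ (Fin n)) : ‖u - (inner ℝ u v : ℝ) • v‖ ≤ ‖u‖ := by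
  have h := norm_sub_sq_real u ((inner ℝ u v : ℝ) • v)
  rw [real_inner_smul_right, norm_smul, hv, Real.norm_eq_abs] at h
  have h2 : ‖u - (inner ℝ u v : ℝ) • v‖ ^ 2 = ‖u‖ ^ 2 - (inner ℝ u v : ℝ) ^ 2 := by
    rw [h, mul_one, sq_abs]; ring
  nlinarith [norm_nonneg (u - (inner ℝ u v : ℝ) • v), norm_nonneg u, sq_nonneg (inner ℝ u v : ℝ)]

lemma aux_proj_lipschitz {n : ℕ} (v : EuclideanSpace ℝ (Fin n)) (hv : ‖v‖ = 1) :
    LipschitzWith 1 (fun x : EuclideanSpace ℝ (Fin n) => x - (inner ℝ x v : ℝ) • v) := by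
  refine LipschitzWith.of_dist_le_mul fun x y => ?_
  rw [NNReal.coe_one, one_mul, dist_eq_norm, dist_eq_norm]
  have : (x - (inner ℝ x v : ℝ) • v) - (y - (inner ℝ y v : ℝ) • v)
      = (x - y) - (inner ℝ (x - y) v : ℝ) • v := by
    rw [inner_sub_left]; push_cast; rw [sub_smul]; abel
  rw [this]
  exact aux_proj_norm_le v hv _


lemma aux_qr {q r s : ℝ} (hr : 0 < r) (hq0 : 0 ≤ q) (hs : s ≤ r / 16)
    (h : q ^ 2 ≤ (s + q / 32) * (4 * r)) : q ≤ r := by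
  by_contra hqr
  push_neg at hqr
  nlinarith [mul_pos (sub_pos.2 hqr) hr, mul_nonneg (sub_pos.2 hqr).le hq0, mul_pos hr hr]

lemma aux_cap_subset {n : ℕ}
    (v : EuclideanSpace ℝ (Fin n)) (hv : ‖v‖ = 1) (r : ℝ) (hr : 0 < r)
    (F : EuclideanSpace ℝ (Fin n) → EuclideanSpace ℝ (Fin n))
    (hF : ∀ x, F x = x + (r / 8) • v
      - ((4 * r)⁻¹ * ‖x - (inner ℝ x v : ℝ) • v‖ ^ 2) • v)
    (A : Set (EuclideanSpace ℝ (Fin n))) (hA : IsClosed A)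
    (h0 : (0 : EuclideanSpace ℝ (Fin n)) ∈ A)
    (hbound : ∀ x ∈ A, ‖x - (inner ℝ x v : ℝ) • v‖ ≤ 4 * r ∧ |(inner ℝ x v : ℝ)| ≤ 4 * r)
    (hflat : ∀ x ∈ A, (inner ℝ x v : ℝ) ≤ r / 16)
    (η : EuclideanSpace ℝ (Fin n)) (hη1 : ‖η‖ = 1)
    (hη2 : 32 * ‖η - (inner ℝ η v : ℝ) • v‖ ≤ (inner ℝ η v : ℝ)) :
    ∃ z ∈ F '' A, ‖z - (inner ℝ z v : ℝ) • v‖ ≤ r ∧ |(inner ℝ z v : ℝ)| ≤ r ∧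
      ∀ w ∈ F '' A, (inner ℝ (w - z) η : ℝ) ≤ 0 := by
  have hvv : (inner ℝ v v : ℝ) = 1 := by
    rw [real_inner_self_eq_norm_sq, hv]; norm_num
  set c : ℝ := (inner ℝ η v : ℝ) with hc
  set τ : EuclideanSpace ℝ (Fin n) := η - c • v with hτ
  have hτv : (inner ℝ τ v : ℝ) = 0 := by
    rw [hτ, inner_sub_left, real_inner_smul_left, hvv]; ring
  have hτnn : 0 ≤ ‖τ‖ := norm_nonneg _
  have hcpos : 0 < c := by
    rcases lt_or_eq_of_le (le_trans (by linarith) hη2 : (0:ℝ) ≤ c) with h | h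
    · exact h
    · exfalso
      have hτ0 : ‖τ‖ = 0 := by nlinarith
      have : η = c • v := by
        have := norm_eq_zero.1 hτ0
        rw [hτ] at this; rwa [sub_eq_zero] at this
      rw [this, ← h] at hη1; simp at hη1
  -- A is compact
  have hAsub : A ⊆ closedBall 0 (8 * r) := by
    intro x hx
    obtain ⟨hb1, hb2⟩ := hbound x hx
    have : x = (x - (inner ℝ x v : ℝ) • v) + (inner ℝ x v : ℝ) • v := by abel
    rw [mem_closedBall, dist_zero_right, this]
    calc ‖(x - (inner ℝ x v : ℝ) • v) + (inner ℝ x v : ℝ) • v‖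
        ≤ ‖x - (inner ℝ x v : ℝ) • v‖ + ‖(inner ℝ x v : ℝ) • v‖ := norm_add_le _ _
      _ ≤ 4 * r + 4 * r := by
          rw [norm_smul, hv, mul_one, Real.norm_eq_abs]; linarith
      _ = 8 * r := by ring
  have hAcomp : IsCompact A :=
    (isCompact_closedBall 0 (8 * r)).of_isClosed_subset hA hAsub
  have hFcont : Continuous F := by
    have : F = fun x => x + (r / 8) • v
        - ((4 * r)⁻¹ * ‖x - (inner ℝ x v : ℝ) • v‖ ^ 2) • v := funext hF
    rw [this]
    exact (continuous_id.add continuous_const).sub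
      ((continuous_const.mul (((continuous_id.sub
        ((continuous_id.inner (𝕜 := ℝ) continuous_const).smul continuous_const)).norm).pow 2)).smul
        continuous_const)
  have hKcomp : IsCompact (F '' A) := hAcomp.image hFcont
  obtain ⟨z, hzK, hzmax⟩ := hKcomp.exists_isMaxOn ⟨F 0, Set.mem_image_of_mem F h0⟩
    (Continuous.continuousOn (continuous_id.inner continuous_const) :
      ContinuousOn (fun x : EuclideanSpace ℝ (Fin n) => (inner ℝ x η : ℝ)) (F '' A))
  obtain ⟨a, haA, haz⟩ := hzK
  set p : EuclideanSpace ℝ (Fin n) := a - (inner ℝ a v : ℝ) • v with hp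
  set s : ℝ := (inner ℝ a v : ℝ) with hsdef
  set q : ℝ := ‖p‖ with hq
  have hq0 : 0 ≤ q := norm_nonneg _
  have hpv : (inner ℝ p v : ℝ) = 0 := by
    rw [hp, inner_sub_left, real_inner_smul_left, hvv]; ring
  set zv : ℝ := s + r / 8 - (4 * r)⁻¹ * q ^ 2 with hzv
  have hzeq : z = p + zv • v := by
    rw [← haz, hF a, hp, hzv]
    simp only [← hsdef, ← hq]
    module
  have hinnerzv : (inner ℝ z v : ℝ) = zv := by
    rw [hzeq, inner_add_left, real_inner_smul_left, hpv, hvv]; ring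
  have hzp : z - (inner ℝ z v : ℝ) • v = p := by
    rw [hinnerzv, hzeq]; abel
  -- maximality against F 0
  have hF0 : F 0 = (r / 8) • v := by
    rw [hF 0]; simp
  have hmax0 : (r / 8) * c ≤ (inner ℝ z η : ℝ) := by
    have := hzmax (Set.mem_image_of_mem F h0)
    simp only [Set.mem_setOf_eq, hF0] at this
    calc (r / 8) * c = (inner ℝ ((r/8) • v) η : ℝ) := by
          rw [real_inner_smul_left, real_inner_comm]
      _ ≤ _ := this
  have hinnerzη : (inner ℝ z η : ℝ) = (inner ℝ p τ : ℝ) + zv * c := by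
    have hηeq : η = τ + c • v := by rw [hτ]; abel
    rw [hzeq, inner_add_left, real_inner_smul_left]
    rw [hηeq, inner_add_right (𝕜 := ℝ), real_inner_smul_right, hpv]
    have : (inner ℝ v (τ + c • v) : ℝ) = c := by
      rw [inner_add_right (𝕜 := ℝ), real_inner_smul_right, hvv, real_inner_comm, hτv]; ring
    rw [this]; ring
  have hCS : (inner ℝ p τ : ℝ) ≤ q * (c / 32) := by
    calc (inner ℝ p τ : ℝ) ≤ ‖p‖ * ‖τ‖ := real_inner_le_norm p τ
      _ ≤ q * (c / 32) := by
          apply mul_le_mul_of_nonneg_left _ hq0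
          linarith
  -- divide by c
  have hkey : r / 8 ≤ q / 32 + zv := by
    have h1 : (r / 8) * c ≤ (q / 32 + zv) * c := by
      rw [hinnerzη] at hmax0; nlinarith
    exact le_of_mul_le_mul_right h1 hcpos
  have hs16 : s ≤ r / 16 := hflat a haA
  have hq4 : q ≤ 4 * r := (hbound a haA).1
  have hqs : q ^ 2 * (4 * r)⁻¹ ≤ s + q / 32 := by
    rw [hzv] at hkey; linarith [hkey]
  have h4r : (0:ℝ) < 4 * r := by positivity
  have hq2 : q ^ 2 ≤ (s + q / 32) * (4 * r) := by
    have h := mul_le_mul_of_nonneg_right hqs h4r.le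
    rwa [mul_assoc, inv_mul_cancel₀ h4r.ne', mul_one] at h
  have hqr : q ≤ r := aux_qr hr hq0 hs16 hq2
  have hzv_le : zv ≤ r := by
    have : 0 ≤ (4 * r)⁻¹ * q ^ 2 := by positivity
    rw [hzv]; linarith
  have hzv_ge : -r ≤ zv := by
    have h1 : r / 8 - q / 32 ≤ zv := by linarith only [hkey]
    have h2 : -r ≤ r / 8 - q / 32 := by linarith only [hqr, hr]
    exact le_trans h2 h1
  refine ⟨z, ⟨a, haA, haz⟩, ?_, ?_, ?_⟩
  · rw [hzp]; exact hqr
  · rw [hinnerzv, abs_le]; exact ⟨hzv_ge, hzv_le⟩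
  · intro w hw
    rw [inner_sub_left]
    have := hzmax hw
    simp only [Set.mem_setOf_eq] at this
    linarith [this]


/-- Let `v` be a unit vector in `ℝⁿ` (`n ≥ 2`), `T_♮ x = x - (x · v) v` the orthogonal
projection onto `T = {x : x · v = 0}`, `r > 0`, and `F(x) = x + (r/8) v - (4r)⁻¹ |T_♮ x|² v`.
If `A ⊆ ℝⁿ` is closed, `0 ∈ A`, `A ⊆ {x : |T_♮ x| ≤ 4r, |x · v| ≤ 4r}` and `x · v ≤ r/16` for
every `x ∈ A`, then the set of directions `η ∈ S^{n-1}` for which there exists `z ∈ F(A)` with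
`|T_♮ z| ≤ r`, `|z · v| ≤ r` and `(w - z) · η ≤ 0` for all `w ∈ F(A)` has `H^{n-1}` measure at
least `α_{n-1} (1 + 32²)^{-(n-1)/2}`, where `α_{n-1}` is the Lebesgue measure of the unit ball
in `ℝ^{n-1}`. -/
theorem stmt13 {n : ℕ} (hn : 2 ≤ n)
    (v : EuclideanSpace ℝ (Fin n)) (hv : ‖v‖ = 1) (r : ℝ) (hr : 0 < r)
    (F : EuclideanSpace ℝ (Fin n) → EuclideanSpace ℝ (Fin n))
    (hF : ∀ x, F x = x + (r / 8) • v
      - ((4 * r)⁻¹ * ‖x - (inner ℝ x v : ℝ) • v‖ ^ 2) • v)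
    (A : Set (EuclideanSpace ℝ (Fin n))) (hA : IsClosed A)
    (h0 : (0 : EuclideanSpace ℝ (Fin n)) ∈ A)
    (hbound : ∀ x ∈ A, ‖x - (inner ℝ x v : ℝ) • v‖ ≤ 4 * r ∧ |(inner ℝ x v : ℝ)| ≤ 4 * r)
    (hflat : ∀ x ∈ A, (inner ℝ x v : ℝ) ≤ r / 16) :
    volume (Metric.ball (0 : EuclideanSpace ℝ (Fin (n - 1))) 1) *
        ENNReal.ofReal ((1 + 32 ^ 2 : ℝ) ^ (-(((n : ℝ) - 1) / 2)))
      ≤ μH[((n : ℝ) - 1)] {η : EuclideanSpace ℝ (Fin n) | ‖η‖ = 1 ∧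
          ∃ z ∈ F '' A, ‖z - (inner ℝ z v : ℝ) • v‖ ≤ r ∧ |(inner ℝ z v : ℝ)| ≤ r ∧
            ∀ w ∈ F '' A, (inner ℝ (w - z) η : ℝ) ≤ 0} := by

  -- notation
  have hn1 : 1 ≤ n := le_trans (by norm_num) hn
  have hd0 : (0:ℝ) ≤ (n : ℝ) - 1 := by
    have : (1:ℝ) ≤ (n:ℝ) := by exact_mod_cast hn1
    linarith
  have hm : ((n - 1 : ℕ) : ℝ) = (n : ℝ) - 1 := by
    push_cast [Nat.cast_sub hn1]; ring
  set S := {η : EuclideanSpace ℝ (Fin n) | ‖η‖ = 1 ∧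
      ∃ z ∈ F '' A, ‖z - (inner ℝ z v : ℝ) • v‖ ≤ r ∧ |(inner ℝ z v : ℝ)| ≤ r ∧
        ∀ w ∈ F '' A, (inner ℝ (w - z) η : ℝ) ≤ 0} with hS
  set C := {η : EuclideanSpace ℝ (Fin n) | ‖η‖ = 1 ∧
      32 * ‖η - (inner ℝ η v : ℝ) • v‖ ≤ (inner ℝ η v : ℝ)} with hC
  have hCS : C ⊆ S := by
    rintro η ⟨h1, h2⟩
    exact ⟨h1, aux_cap_subset v hv r hr F hF A hA h0 hbound hflat η h1 h2⟩
  -- the subspace and isometry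
  have hvv : (inner ℝ v v : ℝ) = 1 := by
    rw [real_inner_self_eq_norm_sq, hv]; norm_num
  have hv0 : v ≠ 0 := by intro h; rw [h, norm_zero] at hv; exact zero_ne_one hv
  have hfr : Module.finrank ℝ ((ℝ ∙ v)ᗮ) = n - 1 := by
    have h1 : Module.finrank ℝ (ℝ ∙ v) = 1 := finrank_span_singleton hv0
    have h2 := Submodule.finrank_add_finrank_orthogonal (K := ℝ ∙ v)
    rw [h1, finrank_euclideanSpace_fin] at h2
    omega
  set W := (ℝ ∙ v)ᗮ with hW
  let b : OrthonormalBasis (Fin (n-1)) ℝ W := (stdOrthonormalBasis ℝ W).reindex (finCongr hfr)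
  let e : W ≃ₗᵢ[ℝ] EuclideanSpace ℝ (Fin (n-1)) := b.repr
  let ι : EuclideanSpace ℝ (Fin (n-1)) → EuclideanSpace ℝ (Fin n) :=
    fun y => ((e.symm y : W) : EuclideanSpace ℝ (Fin n))
  have hι : Isometry ι := isometry_subtype_coe.comp e.symm.isometry
  have hιv : ∀ y, (inner ℝ (ι y) v : ℝ) = 0 := fun y =>
    Submodule.mem_orthogonal_singleton_iff_inner_left.mp (e.symm y).2
  have hιn : ∀ y, ‖ι y‖ = ‖y‖ := fun y => by
    rw [show ‖ι y‖ = ‖e.symm y‖ from rfl, e.symm.norm_map]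
  -- radius
  set ρ : ℝ := (1 + 32 ^ 2 : ℝ) ^ (-(1/2 : ℝ)) with hρ
  have hA0 : (0:ℝ) < 1 + 32 ^ 2 := by norm_num
  have hρpos : 0 < ρ := Real.rpow_pos_of_pos hA0 _
  have hρ2 : ρ ^ 2 = (1 + 32 ^ 2 : ℝ)⁻¹ := by
    rw [hρ, sq, ← Real.rpow_add hA0]
    norm_num
  -- the projection map
  set π : EuclideanSpace ℝ (Fin n) → EuclideanSpace ℝ (Fin n) :=
    fun x => x - (inner ℝ x v : ℝ) • v with hπ
  -- ball image inside π '' C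
  have hball : ι '' (closedBall 0 ρ) ⊆ π '' C := by
    rintro x ⟨y, hy, rfl⟩
    set τ' : EuclideanSpace ℝ (Fin n) := ι y with hτ'
    have hτv' : (inner ℝ τ' v : ℝ) = 0 := hιv y
    have ht0 : 0 ≤ ‖τ'‖ := norm_nonneg _
    have htρ : ‖τ'‖ ≤ ρ := by
      rw [hιn y]
      rwa [mem_closedBall, dist_zero_right] at hy
    have ht2 : ‖τ'‖ ^ 2 ≤ (1 + 32 ^ 2 : ℝ)⁻¹ := by
      rw [← hρ2]; exact pow_le_pow_left₀ ht0 htρ 2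
    have ht1 : 0 ≤ 1 - ‖τ'‖ ^ 2 := by
      have : ((1 + 32 ^ 2 : ℝ))⁻¹ ≤ 1 := by norm_num
      linarith
    set c' : ℝ := Real.sqrt (1 - ‖τ'‖ ^ 2) with hc'
    have hc'0 : 0 ≤ c' := Real.sqrt_nonneg _
    have hc'sq : c' ^ 2 = 1 - ‖τ'‖ ^ 2 := Real.sq_sqrt ht1
    set η : EuclideanSpace ℝ (Fin n) := τ' + c' • v with hη
    have hinner_ηv : (inner ℝ η v : ℝ) = c' := by
      rw [hη, inner_add_left, real_inner_smul_left, hvv, hτv']; ring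
    have hπη : η - (inner ℝ η v : ℝ) • v = τ' := by
      rw [hinner_ηv, hη]; abel
    have hnormη : ‖η‖ = 1 := by
      have h := norm_add_sq_real τ' (c' • v)
      rw [real_inner_smul_right, hτv', norm_smul, hv, Real.norm_eq_abs,
        abs_of_nonneg hc'0, mul_one] at h
      have h2 : ‖η‖ ^ 2 = 1 := by rw [hη, h, hc'sq]; ring
      calc ‖η‖ = Real.sqrt (‖η‖ ^ 2) := (Real.sqrt_sq (norm_nonneg _)).symm
        _ = 1 := by rw [h2, Real.sqrt_one]
    have hcap : 32 * ‖τ'‖ ≤ c' := by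
      apply Real.le_sqrt_of_sq_le
      nlinarith [ht2]
    refine ⟨η, ⟨hnormη, ?_⟩, hπη⟩
    rw [hπη, hinner_ηv]
    exact hcap
  -- measure chain
  have hπlip : LipschitzWith 1 π := aux_proj_lipschitz v hv
  calc volume (Metric.ball (0 : EuclideanSpace ℝ (Fin (n - 1))) 1) *
        ENNReal.ofReal ((1 + 32 ^ 2 : ℝ) ^ (-(((n : ℝ) - 1) / 2)))
      = ENNReal.ofReal (ρ ^ (n - 1)) *
          volume (Metric.ball (0 : EuclideanSpace ℝ (Fin (n - 1))) 1) := by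
        rw [mul_comm]
        congr 2
        rw [hρ, ← Real.rpow_natCast ((1 + 32 ^ 2 : ℝ) ^ (-(1/2 : ℝ))) (n-1),
          ← Real.rpow_mul hA0.le]
        congr 1
        rw [hm]; ring
    _ = volume (closedBall (0 : EuclideanSpace ℝ (Fin (n - 1))) ρ) := by
        rw [Measure.addHaar_closedBall _ _ hρpos.le, finrank_euclideanSpace_fin]
    _ ≤ μH[((n - 1 : ℕ) : ℝ)] (closedBall (0 : EuclideanSpace ℝ (Fin (n - 1))) ρ) :=
        aux_vol_le_hausdorff _ measurableSet_closedBall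
    _ = μH[((n : ℝ) - 1)] (closedBall (0 : EuclideanSpace ℝ (Fin (n - 1))) ρ) := by rw [hm]
    _ = μH[((n : ℝ) - 1)] (ι '' (closedBall 0 ρ)) :=
        (hι.hausdorffMeasure_image (Or.inl hd0) _).symm
    _ ≤ μH[((n : ℝ) - 1)] (π '' C) := measure_mono hball
    _ ≤ μH[((n : ℝ) - 1)] C := by
        simpa using hπlip.hausdorffMeasure_image_le hd0 C
    _ ≤ μH[((n : ℝ) - 1)] S := measure_mono hCS
end
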